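/- arXiv:1203.0946 — 3 statements merged into one kernel-verified Lean document; each statement's English description precedes it below -/
import Mathlib

section
/- Let A₁ ⊆ V₁, B₁ ⊆ W₁, A₂ ⊆ V₂, B₂ ⊆ W₂ and C ⊆ U be almost compact cones in finite-dimensional real vector spaces, let n > 0 be an integer, and let f : V₁ → W₁ and g : V₂ → W₂ be linear maps with f(A₁) ⊆ B₁, g(A₂) ⊆ B₂, closure(f(A₁)) = B₁ and closure(g(A₂)) = B₂. Then: (a) the closure of (f ⊗ g)(A₁ ⊗ A₂) equals B₁ ⊗ B₂; (b) the closure of f^(⊗n)(Symⁿ(A₁)) equals Symⁿ(B₁); (c) the precomposition map F ↦ F ∘ f from Hom(W₁,U) to Hom(V₁,U) is injective and satisfies {F : F ∘ f ∈ Hom(A₁,C)} = Hom(B₁,C), i.e. it is a strongly injective morphism from the cone Hom(B₁,C) to the cone Hom(A₁,C). -/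
/-- A convex cone `C` in a finite-dimensional real vector space is an *almost compact cone*
if it is a convex cone that is closed, pointed (`C ∩ (−C) = {0}`) and full-dimensional
(nonempty interior). -/
def IsACCone {V : Type*} [NormedAddCommGroup V] [NormedSpace ℝ V] (C : Set V) : Prop :=
  (∀ x ∈ C, ∀ y ∈ C, x + y ∈ C) ∧
  (∀ c : ℝ, 0 ≤ c → ∀ x ∈ C, c • x ∈ C) ∧
  IsClosed C ∧
  C ∩ (-C) = {0} ∧
  (interior C).Nonempty

/-- The tensor product cone `C₁ ⊗ C₂`, realized inside `W` via the bilinear map `u`: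
all finite sums `∑ⱼ u (aⱼ) (bⱼ)` with `aⱼ ∈ C₁`, `bⱼ ∈ C₂`. -/
def bilinCone {V₁ V₂ W : Type*} [AddCommGroup V₁] [Module ℝ V₁] [AddCommGroup V₂]
    [Module ℝ V₂] [AddCommGroup W] [Module ℝ W]
    (u : V₁ →ₗ[ℝ] V₂ →ₗ[ℝ] W) (C₁ : Set V₁) (C₂ : Set V₂) : Set W :=
  {z | ∃ (k : ℕ) (a : Fin k → V₁) (b : Fin k → V₂),
    (∀ j, a j ∈ C₁) ∧ (∀ j, b j ∈ C₂) ∧ z = ∑ j, u (a j) (b j)}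

/-- The cone `Symⁿ(C)` realized via the symmetrization map `q`: all finite nonnegative
combinations of elements `q(v₁,…,vₙ)` with `vᵢ ∈ C`. -/
def symCone {V S : Type*} [AddCommGroup V] [Module ℝ V] [AddCommGroup S] [Module ℝ S]
    {n : ℕ} (q : MultilinearMap ℝ (fun _ : Fin n => V) S) (C : Set V) : Set S :=
  {s | ∃ (k : ℕ) (c : Fin k → ℝ) (v : Fin k → Fin n → V),
    (∀ j, 0 ≤ c j) ∧ (∀ j i, v j i ∈ C) ∧ s = ∑ j, c j • q (v j)}

open Set in
private lemma acl_closure_add {E : Type*} [NormedAddCommGroup E] {S : Set E}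
    (h : ∀ x ∈ S, ∀ y ∈ S, x + y ∈ S) :
    ∀ x ∈ closure S, ∀ y ∈ closure S, x + y ∈ closure S := by
  intro x hx y hy
  have hc : Continuous fun p : E × E => p.1 + p.2 := continuous_add
  have hmem : (x, y) ∈ closure (S ×ˢ S) := by rw [closure_prod_eq]; exact ⟨hx, hy⟩
  have h2 : (fun p : E × E => p.1 + p.2) '' (S ×ˢ S) ⊆ S := by
    rintro _ ⟨⟨a, b⟩, ⟨ha, hb⟩, rfl⟩; exact h a ha b hb
  exact closure_mono h2 (image_closure_subset_closure_image hc (mem_image_of_mem _ hmem))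

open Set in
private lemma acl_closure_smul {E : Type*} [NormedAddCommGroup E] [NormedSpace ℝ E] {S : Set E}
    (h : ∀ c : ℝ, 0 ≤ c → ∀ x ∈ S, c • x ∈ S) :
    ∀ c : ℝ, 0 ≤ c → ∀ x ∈ closure S, c • x ∈ closure S := by
  intro c hc x hx
  have hcont : Continuous fun y : E => c • y := continuous_const_smul c
  have h2 : (fun y : E => c • y) '' S ⊆ S := by rintro _ ⟨a, ha, rfl⟩; exact h c hc a ha
  exact closure_mono h2 (image_closure_subset_closure_image hcont (mem_image_of_mem _ hx))

private lemma acl_sum_mem {E ι : Type*} [AddCommMonoid E] {S : Set E}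
    (hadd : ∀ x ∈ S, ∀ y ∈ S, x + y ∈ S) (h0 : (0:E) ∈ S)
    (t : Finset ι) (z : ι → E) (hz : ∀ i ∈ t, z i ∈ S) : (∑ i ∈ t, z i) ∈ S :=
  Finset.sum_induction z (· ∈ S) (fun a b ha hb => hadd a ha b hb) h0 hz

open Set in
private lemma acl_isCompact_convexHull {E : Type*} [NormedAddCommGroup E] [NormedSpace ℝ E]
    [FiniteDimensional ℝ E] {s : Set E} (hs : IsCompact s) (hne : s.Nonempty) :
    IsCompact (convexHull ℝ s) := by
  classical
  set d := Module.finrank ℝ E + 1 with hd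
  obtain ⟨x₀, hx₀⟩ := hne
  have key : convexHull ℝ s =
      (fun p : (Fin d → ℝ) × (Fin d → E) => ∑ i, p.1 i • p.2 i) ''
        ((stdSimplex ℝ (Fin d)) ×ˢ (Set.univ.pi fun _ : Fin d => s)) := by
    apply Subset.antisymm
    · intro x hx
      obtain ⟨ι, hι, z, w, hzs, hai, hw0, hw1, hwx⟩ := eq_pos_convex_span_of_mem_convexHull hx
      have hcard : Fintype.card ι ≤ d := by
        have h1 := hai.card_le_finrank_succ
        have h2 : Module.finrank ℝ (vectorSpan ℝ (Set.range z)) ≤ Module.finrank ℝ E :=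
          Submodule.finrank_le _
        omega
      have hfd : Fintype.card ι ≤ Fintype.card (Fin d) := by simpa using hcard
      obtain ⟨emb⟩ : Nonempty (ι ↪ Fin d) := Function.Embedding.nonempty_of_card_le hfd
      set w' : Fin d → ℝ := Function.extend emb w 0 with hw'
      set z' : Fin d → E := Function.extend emb z fun _ => x₀ with hz'
      have hsum : ∀ (F : Fin d → E), (∀ i, (¬∃ j, emb j = i) → F i = 0) →
          ∑ i, F i = ∑ j, F (emb j) := by
        intro F h0
        have h1 : ∑ i ∈ Finset.image ⇑emb Finset.univ, F i = ∑ j : ι, F (emb j) :=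
          Finset.sum_image (fun a _ b _ h => emb.injective h)
        rw [← h1]
        symm
        apply Finset.sum_subset (Finset.subset_univ _)
        intro i _ hi
        apply h0
        rintro ⟨j, rfl⟩
        exact hi (Finset.mem_image.2 ⟨j, Finset.mem_univ j, rfl⟩)
      have hsumR : ∀ (F : Fin d → ℝ), (∀ i, (¬∃ j, emb j = i) → F i = 0) →
          ∑ i, F i = ∑ j, F (emb j) := by
        intro F h0
        have h1 : ∑ i ∈ Finset.image ⇑emb Finset.univ, F i = ∑ j : ι, F (emb j) :=
          Finset.sum_image (fun a _ b _ h => emb.injective h)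
        rw [← h1]
        symm
        apply Finset.sum_subset (Finset.subset_univ _)
        intro i _ hi
        apply h0
        rintro ⟨j, rfl⟩
        exact hi (Finset.mem_image.2 ⟨j, Finset.mem_univ j, rfl⟩)
      have hw'mem : w' ∈ stdSimplex ℝ (Fin d) := by
        constructor
        · intro i
          rcases em (∃ j, emb j = i) with ⟨j, rfl⟩ | h
          · rw [hw', emb.injective.extend_apply]; exact (hw0 j).le
          · rw [hw', Function.extend_apply' _ _ _ h]; rfl
        · have hz0 : ∀ i, (¬∃ j, emb j = i) → w' i = 0 := by
            intro i h; rw [hw', Function.extend_apply' _ _ _ h]; rfl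
          rw [hsumR w' hz0]
          simp only [hw', emb.injective.extend_apply]
          exact hw1
      have hz'mem : z' ∈ Set.univ.pi fun _ : Fin d => s := by
        intro i _
        rcases em (∃ j, emb j = i) with ⟨j, rfl⟩ | h
        · rw [hz', emb.injective.extend_apply]; exact hzs ⟨j, rfl⟩
        · rw [hz', Function.extend_apply' _ _ _ h]; exact hx₀
      have hxeq : ∑ i, w' i • z' i = x := by
        have h0 : ∀ i, (¬∃ j, emb j = i) → w' i • z' i = 0 := by
          intro i h; rw [hw', Function.extend_apply' _ _ _ h]; simp
        rw [hsum (fun i => w' i • z' i) h0]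
        simp only [hw', hz', emb.injective.extend_apply]
        exact hwx
      exact ⟨(w', z'), ⟨hw'mem, hz'mem⟩, hxeq⟩
    · rintro _ ⟨⟨w, z⟩, ⟨hw, hz⟩, rfl⟩
      have := Finset.centerMass_mem_convexHull (Finset.univ : Finset (Fin d))
        (w := w) (fun i _ => hw.1 i) (by rw [hw.2]; norm_num) (z := z)
        (fun i _ => hz i trivial)
      rwa [Finset.centerMass_eq_of_sum_1 _ _ hw.2] at this
  rw [key]
  apply IsCompact.image
  · exact IsCompact.prod (by apply isCompact_stdSimplex) (isCompact_univ_pi fun _ => hs)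
  · exact continuous_finset_sum _ fun i _ =>
      (((continuous_apply i).comp continuous_fst).smul
        ((continuous_apply i).comp continuous_snd))

open Set in
private lemma acl_exists_functional {W : Type*} [NormedAddCommGroup W] [NormedSpace ℝ W]
    [FiniteDimensional ℝ W] {B : Set W} (hB : IsACCone B) :
    ∃ (φ : W →ₗ[ℝ] ℝ) (δ : ℝ), 0 < δ ∧ ∀ w ∈ B, δ * ‖w‖ ≤ φ w := by
  obtain ⟨hadd, hsmul, hcl, hpt, -⟩ := hB
  have h0B : (0 : W) ∈ B := by
    have : (0:W) ∈ ({0} : Set W) := rfl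
    rw [← hpt] at this; exact this.1
  set K : Set W := B ∩ Metric.sphere 0 1 with hK
  have hKcomp : IsCompact K :=
    Metric.isCompact_of_isClosed_isBounded (hcl.inter Metric.isClosed_sphere)
      (Metric.isBounded_sphere.subset inter_subset_right)
  have h0 : (0 : W) ∉ convexHull ℝ K := by
    intro h0
    rw [convexHull_eq] at h0
    obtain ⟨ι, t, w, z, hw, hw1, hz, hcm⟩ := h0
    classical
    rw [Finset.centerMass_eq_of_sum_1 _ _ hw1] at hcm
    have : ∃ i ∈ t, (0:ℝ) < w i := by
      by_contra hcon
      push_neg at hcon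
      have : ∑ i ∈ t, w i ≤ 0 := Finset.sum_nonpos fun i hi => hcon i hi
      linarith
    obtain ⟨i₀, hi₀t, hi₀⟩ := this
    have hsplit : w i₀ • z i₀ + ∑ i ∈ t.erase i₀, w i • z i = 0 := by
      rw [Finset.add_sum_erase _ (fun i => w i • z i) hi₀t]; exact hcm
    have h1 : w i₀ • z i₀ ∈ B := hsmul _ hi₀.le _ (hz i₀ hi₀t).1
    have h2 : w i₀ • z i₀ ∈ -B := by
      rw [Set.mem_neg]
      have heq : -(w i₀ • z i₀) = ∑ i ∈ t.erase i₀, w i • z i :=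
        neg_eq_of_add_eq_zero_right hsplit
      rw [heq]
      exact acl_sum_mem hadd h0B _ _ fun i hi =>
        hsmul _ (hw i (Finset.mem_of_mem_erase hi)) _ (hz i (Finset.mem_of_mem_erase hi)).1
    have : w i₀ • z i₀ ∈ ({0} : Set W) := hpt ▸ ⟨h1, h2⟩
    have hz0 : z i₀ = 0 := by
      rcases smul_eq_zero.1 this with h | h
      · exact absurd h hi₀.ne'
      · exact h
    have := (hz i₀ hi₀t).2
    rw [hz0, mem_sphere_zero_iff_norm, norm_zero] at this
    exact one_ne_zero this.symm
  obtain ⟨ψ, u, hψ0, hψK⟩ :=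
    geometric_hahn_banach_point_closed (convex_convexHull ℝ K)
      (by
        rcases K.eq_empty_or_nonempty with h | h
        · rw [h, convexHull_empty]; exact isClosed_empty
        · exact (acl_isCompact_convexHull hKcomp h).isClosed) h0
  · refine ⟨ψ.toLinearMap, u, by simpa using hψ0, fun w hw => ?_⟩
    rcases eq_or_ne w 0 with rfl | hne
    · simp
    · have hwK : ‖w‖⁻¹ • w ∈ K := by
        refine ⟨hsmul _ (inv_nonneg.2 (norm_nonneg w)) _ hw, ?_⟩
        rw [mem_sphere_zero_iff_norm, norm_smul, norm_inv, norm_norm,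
          inv_mul_cancel₀ (norm_ne_zero_iff.2 hne)]
      have hlt := hψK _ (subset_convexHull ℝ K hwK)
      rw [map_smul, smul_eq_mul] at hlt
      have hwpos : 0 < ‖w‖ := norm_pos_iff.2 hne
      have h3 : u * ‖w‖ < ψ w := by
        rw [inv_mul_eq_div, lt_div_iff₀ hwpos] at hlt
        linarith
      exact h3.le

private lemma acl_base_compact {W : Type*} [NormedAddCommGroup W] [NormedSpace ℝ W]
    [FiniteDimensional ℝ W] (B : Set W) (φ : W →ₗ[ℝ] ℝ) (δ : ℝ) (hBcl : IsClosed B)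
    (hδ : 0 < δ) (hφ : ∀ w ∈ B, δ * ‖w‖ ≤ φ w) : IsCompact (B ∩ {w | φ w = 1}) := by
  have hcl : IsClosed (B ∩ {w | φ w = 1}) :=
    hBcl.inter (isClosed_eq φ.continuous_of_finiteDimensional continuous_const)
  refine Metric.isCompact_of_isClosed_isBounded hcl ?_
  refine (Metric.isBounded_closedBall (x := (0:W)) (r := δ⁻¹)).subset ?_
  intro w hw
  rw [Metric.mem_closedBall, dist_zero_right]
  have h1 : δ * ‖w‖ ≤ 1 := hw.2 ▸ hφ w hw.1
  have h2 := mul_le_mul_of_nonneg_left h1 (inv_nonneg.2 hδ.le)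
  rwa [← mul_assoc, inv_mul_cancel₀ hδ.ne', one_mul, mul_one] at h2

open Set in
private lemma acl_isClosed_of_rep {Y : Type*} [NormedAddCommGroup Y] [NormedSpace ℝ Y]
    [FiniteDimensional ℝ Y] (D S₀ : Set Y) (ψ : Y →ₗ[ℝ] ℝ)
    (hScomp : IsCompact S₀) (hψS : ∀ s ∈ S₀, ψ s = 1)
    (hadd : ∀ x ∈ D, ∀ y ∈ D, x + y ∈ D)
    (hsmul : ∀ c : ℝ, 0 ≤ c → ∀ x ∈ D, c • x ∈ D)
    (h0 : (0:Y) ∈ D) (hS₀D : S₀ ⊆ D)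
    (hrep : ∀ z ∈ D, ∃ (k : ℕ) (lam : Fin k → ℝ) (s : Fin k → Y),
      (∀ j, 0 ≤ lam j) ∧ (∀ j, s j ∈ S₀ ∨ (s j = 0 ∧ lam j = 0)) ∧ z = ∑ j, lam j • s j) :
    IsClosed D := by
  classical
  have hDconv : Convex ℝ D := fun x hx y hy a b ha hb _ =>
    hadd _ (hsmul a ha x hx) _ (hsmul b hb y hy)
  set K' : Set Y := convexHull ℝ (insert 0 S₀) with hK'
  have hK'c : IsCompact K' :=
    acl_isCompact_convexHull (hScomp.insert 0) (insert_nonempty _ _)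
  have hK'D : K' ⊆ D := convexHull_min (insert_subset h0 hS₀D) hDconv
  have hψcont : Continuous ψ := ψ.continuous_of_finiteDimensional
  have hden : ∀ z : Y, (0:ℝ) < max (ψ z) 0 + 1 := fun z => by positivity
  have hgc : Continuous fun z : Y => (max (ψ z) 0 + 1)⁻¹ • z :=
    (((hψcont.max continuous_const).add continuous_const).inv₀
      fun z => (hden z).ne').smul continuous_id
  have hEq : D = {z | 0 ≤ ψ z} ∩ (fun z : Y => (max (ψ z) 0 + 1)⁻¹ • z) ⁻¹' K' := by
    apply Subset.antisymm
    · intro z hz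
      obtain ⟨k, lam, s, hlam, hs, hzeq⟩ := hrep z hz
      have hψz : ψ z = ∑ j, lam j := by
        rw [hzeq, map_sum]
        refine Finset.sum_congr rfl fun j _ => ?_
        rw [map_smul, smul_eq_mul]
        rcases hs j with h | ⟨h1, h2⟩
        · rw [hψS _ h, mul_one]
        · simp [h1, h2]
      have hnn : 0 ≤ ∑ j, lam j := Finset.sum_nonneg fun j _ => hlam j
      have hmax : max (ψ z) 0 = ψ z := max_eq_left (hψz ▸ hnn)
      refine ⟨by rw [mem_setOf_eq, hψz]; exact hnn, ?_⟩
      show (max (ψ z) 0 + 1)⁻¹ • z ∈ K'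
      rw [hmax, hψz]
      have hcm := Finset.centerMass_mem_convexHull (Finset.univ : Finset (Option (Fin k)))
        (w := fun o => Option.elim o 1 lam) (z := fun o => Option.elim o 0 s)
        (fun o _ => by cases o with
          | none => exact zero_le_one
          | some j => exact hlam j)
        (by
          rw [Fintype.sum_option]
          have : (0:ℝ) ≤ ∑ j, lam j := hnn
          simp only [Option.elim]
          linarith)
        (fun o _ => by cases o with
          | none => exact mem_insert 0 S₀
          | some j => rcases hs j with h | ⟨h1, _⟩
                      · exact mem_insert_of_mem _ h
                      · show s j ∈ insert 0 S₀
                        rw [h1]; exact mem_insert 0 S₀)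
      rw [Finset.centerMass] at hcm
      rw [Fintype.sum_option, Fintype.sum_option] at hcm
      simp only [Option.elim, one_smul, smul_zero, zero_add] at hcm
      rw [add_comm (1:ℝ)] at hcm
      rwa [hzeq]
    · rintro z ⟨hz1, hz2⟩
      have h2 := hsmul (max (ψ z) 0 + 1) (hden z).le _ (hK'D hz2)
      rwa [smul_inv_smul₀ (hden z).ne'] at h2
  rw [hEq]
  exact (isClosed_le continuous_const hψcont).inter (hK'c.isClosed.preimage hgc)

private lemma acl_bilin_continuous {W₁ W₂ Y : Type*}
    [NormedAddCommGroup W₁] [NormedSpace ℝ W₁] [FiniteDimensional ℝ W₁]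
    [NormedAddCommGroup W₂] [NormedSpace ℝ W₂] [FiniteDimensional ℝ W₂]
    [NormedAddCommGroup Y] [NormedSpace ℝ Y]
    (u : W₁ →ₗ[ℝ] W₂ →ₗ[ℝ] Y) : Continuous fun p : W₁ × W₂ => u p.1 p.2 := by
  let b := Module.finBasis ℝ W₁
  have key : (fun p : W₁ × W₂ => u p.1 p.2) =
      fun p => ∑ j, b.repr p.1 j • u (b j) p.2 := by
    funext p
    conv_lhs => rw [← b.sum_repr p.1]
    rw [map_sum, LinearMap.sum_apply]
    refine Finset.sum_congr rfl fun j _ => ?_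
    rw [map_smul, LinearMap.smul_apply]
  rw [key]
  refine continuous_finset_sum _ fun j _ => Continuous.smul ?_ ?_
  · have h1 : Continuous (b.coord j) := (b.coord j).continuous_of_finiteDimensional
    have h2 : (fun p : W₁ × W₂ => b.repr p.1 j) = fun p => b.coord j p.1 := by
      funext p; rw [Module.Basis.coord_apply]
    rw [h2]
    exact h1.comp continuous_fst
  · exact (u (b j)).continuous_of_finiteDimensional.comp continuous_snd

private lemma acl_multilinear_continuous {W S : Type*}
    [NormedAddCommGroup W] [NormedSpace ℝ W] [FiniteDimensional ℝ W]
    [NormedAddCommGroup S] [NormedSpace ℝ S] {n : ℕ}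
    (q : MultilinearMap ℝ (fun _ : Fin n => W) S) :
    Continuous fun w : Fin n → W => q w := by
  classical
  let b := Module.finBasis ℝ W
  have key : (fun w : Fin n → W => q w) = fun w =>
      ∑ r : Fin n → Fin (Module.finrank ℝ W),
        (∏ i, b.repr (w i) (r i)) • q (fun i => b (r i)) := by
    funext w
    conv_lhs => rw [show w = (fun i => ∑ j, b.repr (w i) j • b j) from
      funext fun i => (b.sum_repr (w i)).symm]
    rw [q.map_sum]
    refine Finset.sum_congr rfl fun r _ => ?_
    exact q.map_smul_univ (fun i => b.repr (w i) (r i)) (fun i => b (r i))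
  rw [key]
  refine continuous_finset_sum _ fun r _ => Continuous.smul ?_ continuous_const
  refine continuous_finset_prod _ fun i _ => ?_
  have h1 : Continuous (b.coord (r i)) := (b.coord (r i)).continuous_of_finiteDimensional
  have h2 : (fun w : Fin n → W => b.repr (w i) (r i)) = fun w => b.coord (r i) (w i) := by
    funext w; rw [Module.Basis.coord_apply]
  rw [h2]
  exact h1.comp (continuous_apply i)

section ConeBasics
variable {V₁ V₂ W : Type*} [AddCommGroup V₁] [Module ℝ V₁] [AddCommGroup V₂]
    [Module ℝ V₂] [AddCommGroup W] [Module ℝ W]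
    (u : V₁ →ₗ[ℝ] V₂ →ₗ[ℝ] W) (C₁ : Set V₁) (C₂ : Set V₂)

private lemma bilinCone_zero : (0 : W) ∈ bilinCone u C₁ C₂ :=
  ⟨0, Fin.elim0, Fin.elim0, fun j => j.elim0, fun j => j.elim0, by simp⟩

private lemma bilinCone_add : ∀ x ∈ bilinCone u C₁ C₂, ∀ y ∈ bilinCone u C₁ C₂,
    x + y ∈ bilinCone u C₁ C₂ := by
  rintro x ⟨k, a, b, ha, hb, rfl⟩ y ⟨k', a', b', ha', hb', rfl⟩
  refine ⟨k + k', Fin.append a a', Fin.append b b', ?_, ?_, ?_⟩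
  · intro j; induction j using Fin.addCases with
    | left j => rw [Fin.append_left]; exact ha j
    | right j => rw [Fin.append_right]; exact ha' j
  · intro j; induction j using Fin.addCases with
    | left j => rw [Fin.append_left]; exact hb j
    | right j => rw [Fin.append_right]; exact hb' j
  · rw [Fin.sum_univ_add]
    congr 1 <;> refine Finset.sum_congr rfl fun j _ => ?_
    · rw [Fin.append_left, Fin.append_left]
    · rw [Fin.append_right, Fin.append_right]

private lemma bilinCone_smul (hC₁ : ∀ d : ℝ, 0 ≤ d → ∀ v ∈ C₁, d • v ∈ C₁) :
    ∀ c : ℝ, 0 ≤ c → ∀ x ∈ bilinCone u C₁ C₂, c • x ∈ bilinCone u C₁ C₂ := by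
  rintro c hc x ⟨k, a, b, ha, hb, rfl⟩
  refine ⟨k, fun j => c • a j, b, fun j => hC₁ c hc _ (ha j), hb, ?_⟩
  rw [Finset.smul_sum]
  exact Finset.sum_congr rfl fun j _ => by rw [map_smul, LinearMap.smul_apply]

end ConeBasics

section SymBasics
variable {V S : Type*} [AddCommGroup V] [Module ℝ V] [AddCommGroup S] [Module ℝ S]
    {n : ℕ} (q : MultilinearMap ℝ (fun _ : Fin n => V) S) (C : Set V)

private lemma symCone_zero : (0 : S) ∈ symCone q C :=
  ⟨0, Fin.elim0, Fin.elim0, fun j => j.elim0, fun j => j.elim0, by simp⟩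

private lemma symCone_add : ∀ x ∈ symCone q C, ∀ y ∈ symCone q C, x + y ∈ symCone q C := by
  rintro x ⟨k, c, v, hc, hv, rfl⟩ y ⟨k', c', v', hc', hv', rfl⟩
  refine ⟨k + k', Fin.append c c', Fin.append v v', ?_, ?_, ?_⟩
  · intro j; induction j using Fin.addCases with
    | left j => rw [Fin.append_left]; exact hc j
    | right j => rw [Fin.append_right]; exact hc' j
  · intro j; induction j using Fin.addCases with
    | left j => rw [Fin.append_left]; exact hv j
    | right j => rw [Fin.append_right]; exact hv' j
  · rw [Fin.sum_univ_add]
    congr 1 <;> refine Finset.sum_congr rfl fun j _ => ?_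
    · rw [Fin.append_left, Fin.append_left]
    · rw [Fin.append_right, Fin.append_right]

private lemma symCone_smul : ∀ c : ℝ, 0 ≤ c → ∀ x ∈ symCone q C, c • x ∈ symCone q C := by
  rintro c hc x ⟨k, d, v, hd, hv, rfl⟩
  refine ⟨k, fun j => c * d j, v, fun j => mul_nonneg hc (hd j), hv, ?_⟩
  rw [Finset.smul_sum]
  exact Finset.sum_congr rfl fun j _ => by rw [smul_smul]

end SymBasics

/-- Behavior of linearization functors under morphisms with dense image.  Given morphisms
`f : A₁ → B₁` and `g : A₂ → B₂` of almost compact cones with dense image: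
(a) `f ⊗ g` (the map `F` between realizations `X`, `Y` of `V₁ ⊗ V₂`, `W₁ ⊗ W₂`) maps
`A₁ ⊗ A₂` onto a dense subset of `B₁ ⊗ B₂`;
(b) `Symⁿ(f)` (the map `Sf` between realizations `S₁`, `S₂` of the symmetric powers,
which are characterized by their universal properties) maps `Symⁿ(A₁)` onto a dense subset
of `Symⁿ(B₁)`;
(c) precomposition with `f` is a strongly injective morphism
`Hom(B₁,C) → Hom(A₁,C)`: it is injective and `{F | F ∘ f ∈ Hom(A₁,C)} = Hom(B₁,C)`. -/
theorem dense_image_functoriality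
    {V₁ W₁ V₂ W₂ U X Y S₁ S₂ : Type*}
    [NormedAddCommGroup V₁] [NormedSpace ℝ V₁] [FiniteDimensional ℝ V₁]
    [NormedAddCommGroup W₁] [NormedSpace ℝ W₁] [FiniteDimensional ℝ W₁]
    [NormedAddCommGroup V₂] [NormedSpace ℝ V₂] [FiniteDimensional ℝ V₂]
    [NormedAddCommGroup W₂] [NormedSpace ℝ W₂] [FiniteDimensional ℝ W₂]
    [NormedAddCommGroup U] [NormedSpace ℝ U] [FiniteDimensional ℝ U]
    [NormedAddCommGroup X] [NormedSpace ℝ X] [FiniteDimensional ℝ X]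
    [NormedAddCommGroup Y] [NormedSpace ℝ Y] [FiniteDimensional ℝ Y]
    [NormedAddCommGroup S₁] [NormedSpace ℝ S₁] [FiniteDimensional ℝ S₁]
    [NormedAddCommGroup S₂] [NormedSpace ℝ S₂] [FiniteDimensional ℝ S₂]
    (A₁ : Set V₁) (B₁ : Set W₁) (A₂ : Set V₂) (B₂ : Set W₂) (C : Set U)
    (hA₁ : IsACCone A₁) (hB₁ : IsACCone B₁) (hA₂ : IsACCone A₂) (hB₂ : IsACCone B₂)
    (hC : IsACCone C)
    (n : ℕ) (hn : 0 < n)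
    (f : V₁ →ₗ[ℝ] W₁) (g : V₂ →ₗ[ℝ] W₂)
    (hf : ∀ x ∈ A₁, f x ∈ B₁) (hg : ∀ x ∈ A₂, g x ∈ B₂)
    (hfd : closure (f '' A₁) = B₁) (hgd : closure (g '' A₂) = B₂)
    -- `X` realizes `V₁ ⊗ V₂` and `Y` realizes `W₁ ⊗ W₂`
    (uX : V₁ →ₗ[ℝ] V₂ →ₗ[ℝ] X) (huX : Function.Bijective (TensorProduct.lift uX))
    (uY : W₁ →ₗ[ℝ] W₂ →ₗ[ℝ] Y) (huY : Function.Bijective (TensorProduct.lift uY))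
    -- `F` is `f ⊗ g`
    (F : X →ₗ[ℝ] Y) (hF : ∀ a b, F (uX a b) = uY (f a) (g b))
    -- `S₁` realizes `Symⁿ(V₁)` via the symmetric multilinear map `qV`
    (qV : MultilinearMap ℝ (fun _ : Fin n => V₁) S₁)
    (hqVsymm : ∀ (σ : Equiv.Perm (Fin n)) (v : Fin n → V₁), qV (v ∘ σ) = qV v)
    (hqVuniv : ∀ (Z : Type) [AddCommGroup Z] [Module ℝ Z]
      (T : MultilinearMap ℝ (fun _ : Fin n => V₁) Z),
      (∀ (σ : Equiv.Perm (Fin n)) (v : Fin n → V₁), T (v ∘ σ) = T v) →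
      ∃! t : S₁ →ₗ[ℝ] Z, ∀ v : Fin n → V₁, t (qV v) = T v)
    -- `S₂` realizes `Symⁿ(W₁)` via the symmetric multilinear map `qW`
    (qW : MultilinearMap ℝ (fun _ : Fin n => W₁) S₂)
    (hqWsymm : ∀ (σ : Equiv.Perm (Fin n)) (v : Fin n → W₁), qW (v ∘ σ) = qW v)
    (hqWuniv : ∀ (Z : Type) [AddCommGroup Z] [Module ℝ Z]
      (T : MultilinearMap ℝ (fun _ : Fin n => W₁) Z),
      (∀ (σ : Equiv.Perm (Fin n)) (v : Fin n → W₁), T (v ∘ σ) = T v) →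
      ∃! t : S₂ →ₗ[ℝ] Z, ∀ v : Fin n → W₁, t (qW v) = T v)
    -- `Sf` is `f^(⊗n)` restricted to symmetric tensors
    (Sf : S₁ →ₗ[ℝ] S₂) (hSf : ∀ v : Fin n → V₁, Sf (qV v) = qW (f ∘ v)) :
    closure (F '' bilinCone uX A₁ A₂) = bilinCone uY B₁ B₂ ∧
    closure (Sf '' symCone qV A₁) = symCone qW B₁ ∧
    (Function.Injective (fun G : W₁ →ₗ[ℝ] U => G.comp f) ∧
      {G : W₁ →ₗ[ℝ] U | ∀ x ∈ A₁, G (f x) ∈ C} = {G : W₁ →ₗ[ℝ] U | ∀ y ∈ B₁, G y ∈ C}) := by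
  classical
  obtain ⟨φ₁, δ₁, hδ₁, hφ₁⟩ := acl_exists_functional hB₁
  obtain ⟨φ₂, δ₂, hδ₂, hφ₂⟩ := acl_exists_functional hB₂
  -- compact bases
  set K₁ : Set W₁ := B₁ ∩ {w | φ₁ w = 1} with hK₁def
  set K₂ : Set W₂ := B₂ ∩ {w | φ₂ w = 1} with hK₂def
  have hK₁comp : IsCompact K₁ := by
    rw [hK₁def]; exact acl_base_compact B₁ φ₁ δ₁ hB₁.2.2.1 hδ₁ hφ₁
  have hK₂comp : IsCompact K₂ := by
    rw [hK₂def]; exact acl_base_compact B₂ φ₂ δ₂ hB₂.2.2.1 hδ₂ hφ₂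
  have hφ₁pos : ∀ w ∈ B₁, w ≠ 0 → 0 < φ₁ w := fun w hw hne =>
    lt_of_lt_of_le (mul_pos hδ₁ (norm_pos_iff.2 hne)) (hφ₁ w hw)
  have hφ₂pos : ∀ w ∈ B₂, w ≠ 0 → 0 < φ₂ w := fun w hw hne =>
    lt_of_lt_of_le (mul_pos hδ₂ (norm_pos_iff.2 hne)) (hφ₂ w hw)
  have hnorm₁ : ∀ w ∈ B₁, w ≠ 0 → (φ₁ w)⁻¹ • w ∈ K₁ := by
    intro w hw hne
    refine ⟨hB₁.2.1 _ (inv_nonneg.2 (hφ₁pos w hw hne).le) w hw, ?_⟩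
    show φ₁ ((φ₁ w)⁻¹ • w) = 1
    rw [map_smul, smul_eq_mul, inv_mul_cancel₀ (hφ₁pos w hw hne).ne']
  have hnorm₂ : ∀ w ∈ B₂, w ≠ 0 → (φ₂ w)⁻¹ • w ∈ K₂ := by
    intro w hw hne
    refine ⟨hB₂.2.1 _ (inv_nonneg.2 (hφ₂pos w hw hne).le) w hw, ?_⟩
    show φ₂ ((φ₂ w)⁻¹ • w) = 1
    rw [map_smul, smul_eq_mul, inv_mul_cancel₀ (hφ₂pos w hw hne).ne']
  ----------------------------------------------------------------
  -- Part (a)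
  ----------------------------------------------------------------
  have partA : closure (F '' bilinCone uX A₁ A₂) = bilinCone uY B₁ B₂ := by
    -- the functional ψY on Y
    set eY : (TensorProduct ℝ W₁ W₂) ≃ₗ[ℝ] Y := LinearEquiv.ofBijective _ huY with heY
    set β : W₁ →ₗ[ℝ] W₂ →ₗ[ℝ] ℝ :=
      { toFun := fun w₁ => φ₁ w₁ • φ₂
        map_add' := fun x y => by
          show φ₁ (x + y) • φ₂ = φ₁ x • φ₂ + φ₁ y • φ₂
          rw [map_add, add_smul]
        map_smul' := fun c x => by
          show φ₁ (c • x) • φ₂ = (RingHom.id ℝ) c • (φ₁ x • φ₂)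
          rw [map_smul, smul_eq_mul, RingHom.id_apply, mul_smul] } with hβ
    set ψY : Y →ₗ[ℝ] ℝ := (TensorProduct.lift β).comp (eY.symm : Y →ₗ[ℝ] _) with hψYdef
    have hψY : ∀ w₁ w₂, ψY (uY w₁ w₂) = φ₁ w₁ * φ₂ w₂ := by
      intro w₁ w₂
      have h1 : eY (w₁ ⊗ₜ[ℝ] w₂) = uY w₁ w₂ := by
        rw [heY, LinearEquiv.ofBijective_apply, TensorProduct.lift.tmul]
      rw [← h1]
      show (TensorProduct.lift β) (eY.symm (eY (w₁ ⊗ₜ[ℝ] w₂))) = _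
      rw [LinearEquiv.symm_apply_apply, TensorProduct.lift.tmul]
      show φ₁ w₁ • φ₂ w₂ = _
      rw [smul_eq_mul]
    -- the compact generating set
    set S₀ : Set Y := (fun p : W₁ × W₂ => uY p.1 p.2) '' (K₁ ×ˢ K₂) with hS₀def
    have hS₀comp : IsCompact S₀ := (hK₁comp.prod hK₂comp).image (acl_bilin_continuous uY)
    have hψS₀ : ∀ s ∈ S₀, ψY s = 1 := by
      rintro _ ⟨⟨w₁, w₂⟩, ⟨h1, h2⟩, rfl⟩
      rw [hψY, h1.2, h2.2, one_mul]
    have hS₀sub : S₀ ⊆ bilinCone uY B₁ B₂ := by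
      rintro _ ⟨⟨w₁, w₂⟩, ⟨h1, h2⟩, rfl⟩
      exact ⟨1, fun _ => w₁, fun _ => w₂, fun _ => h1.1, fun _ => h2.1, by simp⟩
    have hrepY : ∀ z ∈ bilinCone uY B₁ B₂, ∃ (k : ℕ) (lam : Fin k → ℝ) (s : Fin k → Y),
        (∀ j, 0 ≤ lam j) ∧ (∀ j, s j ∈ S₀ ∨ (s j = 0 ∧ lam j = 0)) ∧
        z = ∑ j, lam j • s j := by
      rintro z ⟨k, a, b, ha, hb, rfl⟩
      refine ⟨k, fun j => if a j = 0 ∨ b j = 0 then 0 else φ₁ (a j) * φ₂ (b j),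
        fun j => if a j = 0 ∨ b j = 0 then 0 else
          uY ((φ₁ (a j))⁻¹ • a j) ((φ₂ (b j))⁻¹ • b j), ?_, ?_, ?_⟩
      · intro j; dsimp only; split_ifs with h
        · exact le_refl 0
        · push_neg at h
          exact (mul_pos (hφ₁pos _ (ha j) h.1) (hφ₂pos _ (hb j) h.2)).le
      · intro j; dsimp only; split_ifs with h
        · exact Or.inr ⟨rfl, rfl⟩
        · push_neg at h
          exact Or.inl ⟨((φ₁ (a j))⁻¹ • a j, (φ₂ (b j))⁻¹ • b j),
            ⟨hnorm₁ _ (ha j) h.1, hnorm₂ _ (hb j) h.2⟩, rfl⟩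
      · refine Finset.sum_congr rfl fun j _ => ?_
        dsimp only
        split_ifs with h
        · rcases h with h | h
          · rw [h]; simp
          · rw [h]; simp
        · push_neg at h
          have h1 : φ₁ (a j) ≠ 0 := (hφ₁pos _ (ha j) h.1).ne'
          have h2 : φ₂ (b j) ≠ 0 := (hφ₂pos _ (hb j) h.2).ne'
          simp only [LinearMap.map_smul₂, map_smul, LinearMap.smul_apply, smul_smul]
          have hcoef : ∀ r : ℝ, r = 1 → r • (uY (a j)) (b j) = (uY (a j)) (b j) :=
            fun r hr => by rw [hr, one_smul]
          refine (hcoef _ ?_).symm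
          field_simp
          try ring
    have hconeYcl : IsClosed (bilinCone uY B₁ B₂) :=
      acl_isClosed_of_rep _ S₀ ψY hS₀comp hψS₀ (bilinCone_add uY B₁ B₂)
        (bilinCone_smul uY B₁ B₂ hB₁.2.1) (bilinCone_zero uY B₁ B₂) hS₀sub hrepY
    have hFmaps : F '' bilinCone uX A₁ A₂ ⊆ bilinCone uY B₁ B₂ := by
      rintro _ ⟨z, ⟨k, a, b, ha, hb, rfl⟩, rfl⟩
      refine ⟨k, fun j => f (a j), fun j => g (b j), fun j => hf _ (ha j),
        fun j => hg _ (hb j), ?_⟩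
      rw [map_sum]
      exact Finset.sum_congr rfl fun j _ => hF (a j) (b j)
    apply Set.Subset.antisymm (closure_minimal hFmaps hconeYcl)
    -- density
    have himadd : ∀ x ∈ F '' bilinCone uX A₁ A₂, ∀ y ∈ F '' bilinCone uX A₁ A₂,
        x + y ∈ F '' bilinCone uX A₁ A₂ := by
      rintro _ ⟨x, hx, rfl⟩ _ ⟨y, hy, rfl⟩
      exact ⟨x + y, bilinCone_add uX A₁ A₂ x hx y hy, map_add F x y⟩
    have hDadd := acl_closure_add himadd
    have hD0 : (0:Y) ∈ closure (F '' bilinCone uX A₁ A₂) :=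
      subset_closure ⟨0, bilinCone_zero uX A₁ A₂, map_zero F⟩
    have stepA : ∀ a ∈ A₁, ∀ w₂ ∈ B₂,
        uY (f a) w₂ ∈ closure (F '' bilinCone uX A₁ A₂) := by
      intro a ha w₂ hw₂
      have hmt : (uY (f a)) '' (g '' A₂) ⊆ F '' bilinCone uX A₁ A₂ := by
        rintro _ ⟨_, ⟨x, hx, rfl⟩, rfl⟩
        exact ⟨uX a x, ⟨1, fun _ => a, fun _ => x, fun _ => ha, fun _ => hx, by simp⟩,
          hF a x⟩
      have hmem : uY (f a) w₂ ∈ (uY (f a)) '' closure (g '' A₂) :=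
        ⟨w₂, by rw [hgd]; exact hw₂, rfl⟩
      have := image_closure_subset_closure_image
        (uY (f a)).continuous_of_finiteDimensional hmem
      exact closure_mono hmt this
    have stepB : ∀ w₁ ∈ B₁, ∀ w₂ ∈ B₂,
        uY w₁ w₂ ∈ closure (F '' bilinCone uX A₁ A₂) := by
      intro w₁ hw₁ w₂ hw₂
      have hmt : (uY.flip w₂) '' (f '' A₁) ⊆ closure (F '' bilinCone uX A₁ A₂) := by
        rintro _ ⟨_, ⟨x, hx, rfl⟩, rfl⟩
        rw [LinearMap.flip_apply]
        exact stepA x hx w₂ hw₂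
      have hmem : uY.flip w₂ w₁ ∈ (uY.flip w₂) '' closure (f '' A₁) :=
        ⟨w₁, by rw [hfd]; exact hw₁, rfl⟩
      have h2 := image_closure_subset_closure_image
        (uY.flip w₂).continuous_of_finiteDimensional hmem
      have h3 := closure_mono hmt h2
      rw [closure_closure] at h3
      rw [← LinearMap.flip_apply (f := uY)]
      exact h3
    rintro z ⟨k, a, b, ha, hb, rfl⟩
    exact acl_sum_mem hDadd hD0 _ _ (fun j _ => stepB (a j) (ha j) (b j) (hb j))
  ----------------------------------------------------------------
  -- Part (b)
  ----------------------------------------------------------------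
  have partB : closure (Sf '' symCone qV A₁) = symCone qW B₁ := by
    set T : MultilinearMap ℝ (fun _ : Fin n => W₁) ℝ :=
      (MultilinearMap.mkPiAlgebra ℝ (Fin n) ℝ).compLinearMap fun _ => φ₁ with hTdef
    have hTapp : ∀ w : Fin n → W₁, T w = ∏ i, φ₁ (w i) := by
      intro w
      rw [hTdef, MultilinearMap.compLinearMap_apply, MultilinearMap.mkPiAlgebra_apply]
    have hTsymm : ∀ (σ : Equiv.Perm (Fin n)) (v : Fin n → W₁), T (v ∘ σ) = T v := by
      intro σ v
      rw [hTapp, hTapp]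
      exact Equiv.prod_comp σ fun i => φ₁ (v i)
    obtain ⟨ψS, hψSdef, -⟩ := hqWuniv ℝ T hTsymm
    set S₀ : Set S₂ := qW '' (Set.univ.pi fun _ : Fin n => K₁) with hS₀def
    have hS₀comp : IsCompact S₀ :=
      (isCompact_univ_pi fun _ => hK₁comp).image (acl_multilinear_continuous qW)
    have hψS₀ : ∀ s ∈ S₀, ψS s = 1 := by
      rintro _ ⟨w, hw, rfl⟩
      rw [hψSdef w, hTapp]
      exact Finset.prod_eq_one fun i _ => (hw i trivial).2
    have hS₀sub : S₀ ⊆ symCone qW B₁ := by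
      rintro _ ⟨w, hw, rfl⟩
      exact ⟨1, fun _ => 1, fun _ => w, fun _ => zero_le_one,
        fun _ i => (hw i trivial).1, by simp⟩
    have hrepS : ∀ z ∈ symCone qW B₁, ∃ (k : ℕ) (lam : Fin k → ℝ) (s : Fin k → S₂),
        (∀ j, 0 ≤ lam j) ∧ (∀ j, s j ∈ S₀ ∨ (s j = 0 ∧ lam j = 0)) ∧
        z = ∑ j, lam j • s j := by
      rintro z ⟨k, c, v, hc, hv, rfl⟩
      refine ⟨k, fun j => if ∃ i, v j i = 0 then 0 else c j * ∏ i, φ₁ (v j i),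
        fun j => if ∃ i, v j i = 0 then 0 else qW (fun i => (φ₁ (v j i))⁻¹ • v j i),
        ?_, ?_, ?_⟩
      · intro j; dsimp only; split_ifs with h
        · exact le_refl 0
        · push_neg at h
          exact mul_nonneg (hc j)
            (Finset.prod_nonneg fun i _ => (hφ₁pos _ (hv j i) (h i)).le)
      · intro j; dsimp only; split_ifs with h
        · exact Or.inr ⟨rfl, rfl⟩
        · push_neg at h
          exact Or.inl ⟨fun i => (φ₁ (v j i))⁻¹ • v j i,
            fun i _ => hnorm₁ _ (hv j i) (h i), rfl⟩
      · refine Finset.sum_congr rfl fun j _ => ?_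
        dsimp only
        split_ifs with h
        · obtain ⟨i, hi⟩ := h
          rw [qW.map_coord_zero i hi]
          simp
        · push_neg at h
          have harg : (fun i => φ₁ (v j i) • ((φ₁ (v j i))⁻¹ • v j i)) = v j :=
            funext fun i => smul_inv_smul₀ (hφ₁pos _ (hv j i) (h i)).ne' _
          conv_lhs => rw [← harg]
          rw [qW.map_smul_univ, smul_smul]
    have hconeScl : IsClosed (symCone qW B₁) :=
      acl_isClosed_of_rep _ S₀ ψS hS₀comp hψS₀ (symCone_add qW B₁)
        (symCone_smul qW B₁) (symCone_zero qW B₁) hS₀sub hrepS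
    have hSfmaps : Sf '' symCone qV A₁ ⊆ symCone qW B₁ := by
      rintro _ ⟨z, ⟨k, c, v, hc, hv, rfl⟩, rfl⟩
      refine ⟨k, c, fun j => f ∘ v j, hc, fun j i => hf _ (hv j i), ?_⟩
      rw [map_sum]
      refine Finset.sum_congr rfl fun j _ => ?_
      rw [map_smul, hSf]
    apply Set.Subset.antisymm (closure_minimal hSfmaps hconeScl)
    -- density
    have himadd : ∀ x ∈ Sf '' symCone qV A₁, ∀ y ∈ Sf '' symCone qV A₁,
        x + y ∈ Sf '' symCone qV A₁ := by
      rintro _ ⟨x, hx, rfl⟩ _ ⟨y, hy, rfl⟩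
      exact ⟨x + y, symCone_add qV A₁ x hx y hy, map_add Sf x y⟩
    have himsmul : ∀ c : ℝ, 0 ≤ c → ∀ x ∈ Sf '' symCone qV A₁,
        c • x ∈ Sf '' symCone qV A₁ := by
      rintro c hcn _ ⟨x, hx, rfl⟩
      exact ⟨c • x, symCone_smul qV A₁ c hcn x hx, map_smul Sf c x⟩
    have hDadd := acl_closure_add himadd
    have hDsmul := acl_closure_smul himsmul
    have hD0 : (0:S₂) ∈ closure (Sf '' symCone qV A₁) :=
      subset_closure ⟨0, symCone_zero qV A₁, map_zero Sf⟩
    have claim : ∀ m : ℕ, ∀ w : Fin n → W₁, (∀ i, w i ∈ B₁) →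
        (∀ i : Fin n, m ≤ (i : ℕ) → w i ∈ f '' A₁) →
        qW w ∈ closure (Sf '' symCone qV A₁) := by
      intro m
      induction m with
      | zero =>
        intro w _ hfa
        have hex : ∀ i, ∃ vi, vi ∈ A₁ ∧ f vi = w i := fun i => by
          obtain ⟨vi, h1, h2⟩ := hfa i (Nat.zero_le _)
          exact ⟨vi, h1, h2⟩
        choose v hv1 hv2 using hex
        have hw : w = f ∘ v := funext fun i => (hv2 i).symm
        rw [hw, ← hSf v]
        exact subset_closure ⟨qV v, ⟨1, fun _ => 1, fun _ => v, fun _ => zero_le_one,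
          fun _ i => hv1 i, by simp⟩, rfl⟩
      | succ m ih =>
        intro w hw hfa
        by_cases hmn : m < n
        · set i₀ : Fin n := ⟨m, hmn⟩ with hi₀def
          set t : W₁ →ₗ[ℝ] S₂ := qW.toLinearMap w i₀ with htdef
          have htapp : ∀ x, t x = qW (Function.update w i₀ x) := fun x => rfl
          have hmt : t '' (f '' A₁) ⊆ closure (Sf '' symCone qV A₁) := by
            rintro _ ⟨_, ⟨x, hx, rfl⟩, rfl⟩
            rw [htapp]
            apply ih
            · intro i
              rcases eq_or_ne i i₀ with rfl | hne
              · rw [Function.update_self]; exact hf x hx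
              · rw [Function.update_of_ne hne]; exact hw i
            · intro i him
              rcases eq_or_ne i i₀ with rfl | hne
              · rw [Function.update_self]; exact ⟨x, hx, rfl⟩
              · rw [Function.update_of_ne hne]
                apply hfa
                have : (i : ℕ) ≠ m := fun hh => hne (Fin.ext hh)
                omega
          have hmem : t (w i₀) ∈ t '' closure (f '' A₁) :=
            ⟨w i₀, by rw [hfd]; exact hw i₀, rfl⟩
          have h2 := image_closure_subset_closure_image
            t.continuous_of_finiteDimensional hmem
          have h3 := closure_mono hmt h2
          rw [closure_closure] at h3
          rw [htapp, Function.update_eq_self] at h3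
          exact h3
        · apply ih w hw
          intro i him
          exact absurd i.isLt (by omega)
    rintro z ⟨k, c, v, hc, hv, rfl⟩
    refine acl_sum_mem hDadd hD0 _ _ (fun j _ => ?_)
    refine hDsmul (c j) (hc j) _ ?_
    refine claim n (v j) (hv j) ?_
    intro i him
    exact absurd i.isLt (by omega)
  ----------------------------------------------------------------
  -- Part (c)
  ----------------------------------------------------------------
  have hfsurj : Function.Surjective f := by
    have hr : IsClosed ((LinearMap.range f : Submodule ℝ W₁) : Set W₁) :=
      Submodule.closed_of_finiteDimensional _
    have hBsub : B₁ ⊆ (LinearMap.range f : Submodule ℝ W₁) := by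
      rw [← hfd]
      refine closure_minimal ?_ hr
      rintro _ ⟨x, -, rfl⟩
      exact ⟨x, rfl⟩
    have htop : (LinearMap.range f : Submodule ℝ W₁) = ⊤ := by
      apply Submodule.eq_top_of_nonempty_interior'
      obtain ⟨y, hy⟩ := hB₁.2.2.2.2
      exact ⟨y, interior_mono hBsub hy⟩
    intro y
    have : y ∈ LinearMap.range f := htop ▸ Submodule.mem_top
    exact this
  refine ⟨partA, partB, ?_, ?_⟩
  · intro G G' hGG
    simp only at hGG
    ext w
    obtain ⟨v, rfl⟩ := hfsurj w
    exact LinearMap.congr_fun hGG v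
  · ext G
    simp only [Set.mem_setOf_eq]
    constructor
    · intro hG y hy
      have hmt : G '' (f '' A₁) ⊆ C := by
        rintro _ ⟨_, ⟨x, hx, rfl⟩, rfl⟩
        exact hG x hx
      have hmem : G y ∈ G '' closure (f '' A₁) := ⟨y, by rw [hfd]; exact hy, rfl⟩
      have h2 := image_closure_subset_closure_image
        G.continuous_of_finiteDimensional hmem
      have h3 := closure_mono hmt h2
      rwa [hC.2.2.1.closure_eq] at h3
    · intro hG x hx
      exact hG (f x) (hf x hx)
end

section
/- Let m, n ≥ 2, let W be the finite-dimensional real vector space of biquadratic forms, i.e. real polynomials in variables x₁,…,x_m, y₁,…,y_n that are homogeneous of degree 2 in the x-variables and homogeneous of degree 2 in the y-variables, and let P ⊆ W be the convex cone of those forms p with p(x,y) ≥ 0 for all x ∈ ℝ^m and y ∈ ℝ^n. Then P is not a basic closed semialgebraic set: there do not exist finitely many real polynomial functions g₁,…,g_k on W (polynomials in the coefficients of a biquadratic form) such that P = {p ∈ W : gᵢ(p) ≥ 0 for all i = 1,…,k}. In particular P, which is canonically identified with the cone Hom(S₊(V), S₊(W*)), is not a spectrahedron. -/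
open MvPolynomial

/-- The weight function giving variables `xᵢ` bidegree `(1,0)` and variables `yⱼ`
bidegree `(0,1)`. -/
def biquadWeight (m n : ℕ) : (Fin m ⊕ Fin n) → ℕ × ℕ :=
  Sum.elim (fun _ => (1, 0)) (fun _ => (0, 1))

/-- The space `W` of biquadratic forms: polynomials in `x₁,…,x_m, y₁,…,y_n` that are
homogeneous of degree `2` in the `x`-variables and of degree `2` in the `y`-variables. -/
noncomputable def BiquadSpace (m n : ℕ) : Submodule ℝ (MvPolynomial (Fin m ⊕ Fin n) ℝ) :=
  weightedHomogeneousSubmodule ℝ (biquadWeight m n) (2, 2)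

/-- `G : W → ℝ` is a polynomial function on the real vector space `W`: a polynomial in
finitely many linear coordinates of `W`. -/
def IsPolyFun {W : Type*} [AddCommGroup W] [Module ℝ W] (G : W → ℝ) : Prop :=
  ∃ (k : ℕ) (φ : Fin k → (W →ₗ[ℝ] ℝ)) (q : MvPolynomial (Fin k) ℝ),
    ∀ w, G w = eval (fun i => φ i w) q


section PolyAux
open Polynomial


private theorem signNearZeroAux : ∀ (k : ℕ) (f : Polynomial ℝ), f ≠ 0 → f.natTrailingDegree = k →
    ∃ δ > (0:ℝ), ∀ s : ℝ, s ≠ 0 → |s| < δ →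
      0 < f.eval s * (s ^ f.natTrailingDegree * f.trailingCoeff) := by
  intro k
  induction k with
  | zero =>
    intro f hf hn
    have hc : f.coeff 0 ≠ 0 := by
      have := coeff_natTrailingDegree_ne_zero.mpr hf
      rwa [hn] at this
    have hcont : ContinuousAt (fun s => f.eval s) 0 := (f.continuous).continuousAt
    rcases Metric.continuousAt_iff.mp hcont (|f.coeff 0|/2) (by positivity) with ⟨δ, hδ, hball⟩
    refine ⟨δ, hδ, fun s hs hsδ => ?_⟩
    have h1 : |f.eval s - f.eval 0| < |f.coeff 0|/2 := by
      have := hball (x := s) (by simpa [Real.dist_eq] using hsδ)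
      simpa [Real.dist_eq] using this
    rw [← coeff_zero_eq_eval_zero] at h1
    have htc : f.trailingCoeff = f.coeff 0 := by
      rw [trailingCoeff, hn]
    rw [hn, htc, pow_zero, one_mul]
    rcases abs_lt.mp h1 with ⟨ha, hb⟩
    rcases lt_or_gt_of_ne hc with h | h
    · have : |f.coeff 0| = -(f.coeff 0) := abs_of_neg h
      nlinarith
    · have : |f.coeff 0| = f.coeff 0 := abs_of_pos h
      nlinarith
  | succ k ih =>
    intro f hf hn
    have hc0 : f.coeff 0 = 0 := by
      apply coeff_eq_zero_of_lt_natTrailingDegree; omega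
    have hfX : f = Polynomial.X * f.divX := by
      conv_lhs => rw [← X_mul_divX_add f]
      simp [hc0]
    have hdiv : f.divX ≠ 0 := by
      intro h; rw [h, mul_zero] at hfX; exact hf hfX
    have hXne : (Polynomial.X : Polynomial ℝ) ≠ 0 := X_ne_zero
    have hntd : f.divX.natTrailingDegree = k := by
      have := natTrailingDegree_mul (p := (Polynomial.X : Polynomial ℝ)) (q := f.divX) hXne hdiv
      rw [← hfX, natTrailingDegree_X, hn] at this
      omega
    have htc : f.trailingCoeff = f.divX.trailingCoeff := by
      conv_lhs => rw [hfX]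
      rw [trailingCoeff_mul]
      have : (Polynomial.X : Polynomial ℝ).trailingCoeff = 1 := by
        rw [trailingCoeff, natTrailingDegree_X, coeff_X_one]
      rw [this, one_mul]
    rcases ih f.divX hdiv hntd with ⟨δ, hδ, hsign⟩
    refine ⟨δ, hδ, fun s hs hsδ => ?_⟩
    have h2 := hsign s hs hsδ
    rw [hntd] at h2
    have heval : f.eval s = s * (f.divX.eval s) := by
      conv_lhs => rw [hfX]; simp
    have hkey : f.eval s * (s ^ f.natTrailingDegree * f.trailingCoeff)
        = s^2 * (f.divX.eval s * (s ^ k * f.divX.trailingCoeff)) := by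
      rw [heval, htc, hn]; ring
    rw [hkey]
    have hs2 : (0:ℝ) < s^2 := by positivity
    nlinarith

theorem signNearZero (f : Polynomial ℝ) (hf : f ≠ 0) :
    ∃ δ > (0:ℝ), ∀ s : ℝ, s ≠ 0 → |s| < δ →
      0 < f.eval s * (s ^ f.natTrailingDegree * f.trailingCoeff) :=
  signNearZeroAux f.natTrailingDegree f hf rfl



noncomputable def EE (t s : ℝ) : Polynomial (Polynomial ℝ) →+* ℝ :=
  (Polynomial.evalRingHom s).comp (Polynomial.mapRingHom (Polynomial.evalRingHom t))

theorem EE_apply (t s : ℝ) (q : Polynomial (Polynomial ℝ)) :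
    EE t s q = (q.map (evalRingHom t)).eval s := rfl

theorem map_trailing (q : Polynomial (Polynomial ℝ)) (t : ℝ)
    (h : q.trailingCoeff.eval t ≠ 0) :
    (q.map (evalRingHom t)) ≠ 0 ∧
    (q.map (evalRingHom t)).natTrailingDegree = q.natTrailingDegree ∧
    (q.map (evalRingHom t)).trailingCoeff = q.trailingCoeff.eval t := by
  set qt := q.map (evalRingHom t) with hqt
  have hq : q ≠ 0 := by
    intro h0; rw [h0] at h; simp at h
  have hco : qt.coeff q.natTrailingDegree = q.trailingCoeff.eval t := by
    rw [hqt, Polynomial.coeff_map]; rfl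
  have hne : qt ≠ 0 := by
    intro h0
    rw [h0] at hco; simp at hco; exact h hco.symm
  have hlow : ∀ m < q.natTrailingDegree, qt.coeff m = 0 := by
    intro m hm
    rw [hqt, Polynomial.coeff_map, coeff_eq_zero_of_lt_natTrailingDegree hm]
    simp
  have hntd : qt.natTrailingDegree = q.natTrailingDegree := by
    apply le_antisymm
    · apply natTrailingDegree_le_of_ne_zero
      rw [hco]; exact h
    · exact le_natTrailingDegree hne hlow
  refine ⟨hne, hntd, ?_⟩
  rw [trailingCoeff, hntd, hco]

theorem keyFan (q : Polynomial (Polynomial ℝ))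
    (H1 : ∀ t s : ℝ, -1 < t → t < 0 → |s| ≤ t^2/2 → 0 ≤ EE t s q)
    (H2 : ∀ t s : ℝ, 0 < t → t < 1 → -1 < s → s ≤ 0 → 0 ≤ EE t s q) :
    ∃ t₀ > (0:ℝ), ∀ t, 0 < t → t < t₀ → ∃ δ > (0:ℝ), ∀ s, 0 < s → s < δ → 0 ≤ EE t s q := by
  rcases eq_or_ne q 0 with rfl | hq
  · exact ⟨1, one_pos, fun t _ _ => ⟨1, one_pos, fun s _ _ => by simp [EE_apply]⟩⟩
  set P := q.trailingCoeff with hP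
  have hPne : P ≠ 0 := trailingCoeff_nonzero_iff_nonzero.mpr hq
  set j₀ := q.natTrailingDegree with hj₀
  rcases signNearZero P hPne with ⟨δP, hδP, hPsign⟩
  -- Step 1 : j₀ is even
  have heven : Even j₀ := by
    by_contra hodd
    rw [Nat.not_even_iff_odd] at hodd
    set t := -(min δP 1)/2 with ht
    have ht0 : t < 0 := by
      have : 0 < min δP 1 := lt_min hδP one_pos
      rw [ht]; linarith
    have ht1 : -1 < t := by
      have h1 : min δP 1 ≤ 1 := min_le_right _ _
      rw [ht]; linarith
    have htδ : |t| < δP := by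
      have h1 : min δP 1 ≤ δP := min_le_left _ _
      have : 0 < min δP 1 := lt_min hδP one_pos
      rw [ht, abs_of_neg (by linarith : -(min δP 1)/2 < 0)]
      linarith
    have hPt : P.eval t ≠ 0 := by
      intro h0
      have := hPsign t (by linarith) htδ
      rw [h0] at this; simp at this
    obtain ⟨hne, hntd, htc⟩ := map_trailing q t hPt
    set qt := q.map (evalRingHom t)
    rcases signNearZero qt hne with ⟨δq, hδq, hqsign⟩
    set s := min (min δq (t^2/2)) 1 / 2 with hs
    have hs0 : 0 < s := by
      have ht0' : t ≠ 0 := ne_of_lt ht0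
      have h1 : 0 < min δq (t^2/2) := lt_min hδq (by positivity)
      have : 0 < min (min δq (t^2/2)) 1 := lt_min h1 one_pos
      rw [hs]; linarith
    have hsδq : s < δq := by
      have h1 : min (min δq (t^2/2)) 1 ≤ min δq (t^2/2) := min_le_left _ _
      have h2 : min δq (t^2/2) ≤ δq := min_le_left _ _
      rw [hs]; linarith
    have hsμ : s ≤ t^2/2 := by
      have h1 : min (min δq (t^2/2)) 1 ≤ min δq (t^2/2) := min_le_left _ _
      have h2 : min δq (t^2/2) ≤ t^2/2 := min_le_right _ _
      rw [hs]; linarith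
    have hp := hqsign s (by linarith) (by rw [abs_of_pos hs0]; linarith)
    have hm := hqsign (-s) (by intro h; linarith [neg_eq_zero.mp h])
      (by rw [abs_neg, abs_of_pos hs0]; linarith)
    have hEp := H1 t s ht1 ht0 (by rw [abs_of_pos hs0]; linarith)
    have hEm := H1 t (-s) ht1 ht0 (by rw [abs_neg, abs_of_pos hs0]; linarith)
    rw [EE_apply] at hEp hEm
    rw [hntd, htc] at hp hm
    have hneg : (-s) ^ j₀ = -(s ^ j₀) := hodd.neg_pow s
    -- from hEp : 0 ≤ qt.eval s ; hp : 0 < qt.eval s * (s^j₀ * P.eval t)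
    have h1 : 0 < s ^ j₀ * P.eval t := by
      rcases mul_pos_iff.mp hp with ⟨_, h⟩ | ⟨h, _⟩
      · exact h
      · linarith
    have h2 : 0 < (-s) ^ j₀ * P.eval t := by
      rcases mul_pos_iff.mp hm with ⟨_, h⟩ | ⟨h, _⟩
      · exact h
      · linarith
    rw [hneg] at h2
    nlinarith
  -- Step 2 : positivity of P near 0⁺ and conclusion
  refine ⟨min δP 1, lt_min hδP one_pos, fun t ht0 htδ => ?_⟩
  have htδP : |t| < δP := by
    rw [abs_of_pos ht0]; exact lt_of_lt_of_le htδ (min_le_left _ _)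
  have ht1 : t < 1 := lt_of_lt_of_le htδ (min_le_right _ _)
  have hPt : P.eval t ≠ 0 := by
    intro h0
    have := hPsign t (by linarith) htδP
    rw [h0] at this; simp at this
  obtain ⟨hne, hntd, htc⟩ := map_trailing q t hPt
  set qt := q.map (evalRingHom t) with hqt
  rcases signNearZero qt hne with ⟨δq, hδq, hqsign⟩
  -- use a negative s to show P.eval t > 0
  have hPtpos : 0 < P.eval t := by
    set s := -(min δq 1)/2 with hs
    have hmin : 0 < min δq 1 := lt_min hδq one_pos
    have hs0 : s < 0 := by rw [hs]; linarith
    have hsa : |s| < δq := by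
      rw [hs, abs_of_neg (by linarith : -(min δq 1)/2 < 0)]
      have := min_le_left δq 1; linarith
    have hs1 : -1 < s := by
      rw [hs]; have := min_le_right δq 1; linarith
    have hsgn := hqsign s (by linarith) hsa
    have hE := H2 t s ht0 ht1 hs1 (le_of_lt hs0)
    rw [EE_apply] at hE
    rw [hntd, htc] at hsgn
    have hspow : 0 < s ^ j₀ := heven.pow_pos (by linarith)
    rcases mul_pos_iff.mp hsgn with ⟨_, h⟩ | ⟨h, _⟩
    · nlinarith
    · linarith
  refine ⟨δq, hδq, fun s hs0 hsδ => ?_⟩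
  have hsgn := hqsign s (by linarith) (by rw [abs_of_pos hs0]; linarith)
  rw [hntd, htc] at hsgn
  have hspow : 0 < s ^ j₀ := pow_pos hs0 _
  rw [EE_apply, ← hqt]
  have hsp : 0 < s ^ q.natTrailingDegree * eval t q.trailingCoeff := by
    apply mul_pos _ hPtpos
    exact pow_pos hs0 _
  rcases mul_pos_iff.mp hsgn with ⟨h, _⟩ | ⟨_, h⟩
  · linarith
  · linarith

end PolyAux


theorem ineqKey (τ σ a b c d : ℝ) (h1 : 0 < τ) (h2 : τ ≤ 1) (h3 : 0 ≤ σ) (h4 : σ ≤ τ^2/2)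
    (had : a*d = b*c) : σ * a^2 ≤ (d + τ*a)^2 + (b - c)^2 := by
  have hC : (a*(d+τ*a) + b*(b-c))^2 ≤ (a^2+b^2) * ((d+τ*a)^2 + (b-c)^2) := by
    nlinarith [sq_nonneg (a*(b-c) - b*(d+τ*a))]
  have hid : a*(d+τ*a) + b*(b-c) = τ*a^2 + b^2 := by linear_combination had
  have e1 : (0:ℝ) ≤ (τ^2/2) * a^4 := by positivity
  have e2 : (0:ℝ) ≤ (2*τ - τ^2/2) * (a^2*b^2) := by
    apply mul_nonneg (by nlinarith) (by positivity)
  have e3 : (0:ℝ) ≤ b^4 := by positivity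
  have h5 : τ^2/2 * a^2 * (a^2+b^2) ≤ (τ*a^2 + b^2)^2 := by nlinarith [e1, e2, e3]
  rcases eq_or_lt_of_le (by positivity : (0:ℝ) ≤ a^2 + b^2) with h0 | h0
  · have ha : a = 0 := by nlinarith [sq_nonneg a, sq_nonneg b]
    rw [ha]
    nlinarith [sq_nonneg (d + τ*a), sq_nonneg (b - c)]
  · rw [hid] at hC
    have hnn : (0:ℝ) ≤ a^2 * (a^2+b^2) := by positivity
    have h7 : σ * a^2 * (a^2+b^2) ≤ τ^2/2 * a^2 * (a^2+b^2) := by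
      linarith [mul_le_mul_of_nonneg_right h4 hnn]
    have h6 : σ * a^2 * (a^2+b^2) ≤ ((d+τ*a)^2 + (b-c)^2) * (a^2+b^2) := by
      linarith [hC, h5, h7]
    exact le_of_mul_le_mul_right h6 h0

section Forms
variable {m n : ℕ}

def i0 (hm : 2 ≤ m) : Fin m := ⟨0, by omega⟩
def i1 (hm : 2 ≤ m) : Fin m := ⟨1, by omega⟩

noncomputable def w0raw (hm : 2 ≤ m) (hn : 2 ≤ n) : MvPolynomial (Fin m ⊕ Fin n) ℝ :=
  (X (Sum.inl (i1 hm)) * X (Sum.inr (i1 hn)))^2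
  + (X (Sum.inl (i0 hm)) * X (Sum.inr (i1 hn)) - X (Sum.inl (i1 hm)) * X (Sum.inr (i0 hn)))^2

noncomputable def w1raw (hm : 2 ≤ m) (hn : 2 ≤ n) : MvPolynomial (Fin m ⊕ Fin n) ℝ :=
  (-2 : ℝ) • (X (Sum.inl (i0 hm)) * X (Sum.inr (i0 hn)) * (X (Sum.inl (i1 hm)) * X (Sum.inr (i1 hn))))

noncomputable def wCraw (hm : 2 ≤ m) (hn : 2 ≤ n) : MvPolynomial (Fin m ⊕ Fin n) ℝ :=
  (X (Sum.inl (i0 hm)) * X (Sum.inr (i0 hn)))^2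

theorem memX (i : Fin m) :
    (X (Sum.inl i) : MvPolynomial (Fin m ⊕ Fin n) ℝ)
      ∈ weightedHomogeneousSubmodule ℝ (biquadWeight m n) (1,0) := by
  rw [mem_weightedHomogeneousSubmodule]
  have := isWeightedHomogeneous_X ℝ (biquadWeight m n) (Sum.inl i)
  simpa [biquadWeight] using this

theorem memY (j : Fin n) :
    (X (Sum.inr j) : MvPolynomial (Fin m ⊕ Fin n) ℝ)
      ∈ weightedHomogeneousSubmodule ℝ (biquadWeight m n) (0,1) := by
  rw [mem_weightedHomogeneousSubmodule]
  have := isWeightedHomogeneous_X ℝ (biquadWeight m n) (Sum.inr j)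
  simpa [biquadWeight] using this

theorem memMul {a b : ℕ × ℕ} {p q : MvPolynomial (Fin m ⊕ Fin n) ℝ}
    (hp : p ∈ weightedHomogeneousSubmodule ℝ (biquadWeight m n) a)
    (hq : q ∈ weightedHomogeneousSubmodule ℝ (biquadWeight m n) b) :
    p * q ∈ weightedHomogeneousSubmodule ℝ (biquadWeight m n) (a + b) := by
  rw [mem_weightedHomogeneousSubmodule] at *
  exact hp.mul hq

theorem memXY (i : Fin m) (j : Fin n) :
    (X (Sum.inl i) * X (Sum.inr j) : MvPolynomial (Fin m ⊕ Fin n) ℝ)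
      ∈ weightedHomogeneousSubmodule ℝ (biquadWeight m n) (1,1) := by
  have := memMul (memX (n := n) i) (memY (m := m) j)
  convert this using 2
  rfl

theorem memSq {p : MvPolynomial (Fin m ⊕ Fin n) ℝ}
    (hp : p ∈ weightedHomogeneousSubmodule ℝ (biquadWeight m n) (1,1)) :
    p^2 ∈ weightedHomogeneousSubmodule ℝ (biquadWeight m n) (2,2) := by
  have := memMul hp hp
  rw [pow_two]
  convert this using 2
  rfl

theorem w0mem (hm : 2 ≤ m) (hn : 2 ≤ n) : w0raw hm hn ∈ BiquadSpace m n := by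
  unfold w0raw BiquadSpace
  exact Submodule.add_mem _ (memSq (memXY _ _))
    (memSq (Submodule.sub_mem _ (memXY _ _) (memXY _ _)))

theorem w1mem (hm : 2 ≤ m) (hn : 2 ≤ n) : w1raw hm hn ∈ BiquadSpace m n := by
  unfold w1raw BiquadSpace
  apply Submodule.smul_mem
  have := memMul (memXY (n := n) (i0 hm) (i0 hn)) (memXY (m := m) (i1 hm) (i1 hn))
  convert this using 2
  rfl

theorem wCmem (hm : 2 ≤ m) (hn : 2 ≤ n) : wCraw hm hn ∈ BiquadSpace m n := by
  unfold wCraw BiquadSpace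
  exact memSq (memXY _ _)

theorem evalRaw (hm : 2 ≤ m) (hn : 2 ≤ n) (t s : ℝ) (x : Fin m → ℝ) (y : Fin n → ℝ) :
    eval (Sum.elim x y) (w0raw hm hn + t • w1raw hm hn + (t^2 - s) • wCraw hm hn)
    = (x (i1 hm) * y (i1 hn) - t * (x (i0 hm) * y (i0 hn)))^2
      + (x (i0 hm) * y (i1 hn) - x (i1 hm) * y (i0 hn))^2
      - s * (x (i0 hm) * y (i0 hn))^2 := by
  simp only [w0raw, w1raw, wCraw, smul_eq_C_mul, map_add, map_mul, map_pow, map_sub, eval_C, eval_X,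
    Sum.elim_inl, Sum.elim_inr]
  ring

end Forms


theorem EE_aeval {κ : ℕ} (f : Fin κ → Polynomial (Polynomial ℝ)) (Q : MvPolynomial (Fin κ) ℝ)
    (t s : ℝ) :
    EE t s (MvPolynomial.aeval f Q) = eval (fun j => EE t s (f j)) Q := by
  induction Q using MvPolynomial.induction_on with
  | C a => simp [MvPolynomial.aeval_C, MvPolynomial.eval_C, EE, Polynomial.algebraMap_apply]
  | add p q hp hq => simp [map_add, hp, hq]
  | mul_X p i hp => simp [map_mul, hp]

set_option maxHeartbeats 1000000 in
theorem master (m n : ℕ) (hm : 2 ≤ m) (hn : 2 ≤ n) (ι : Type*) [Fintype ι]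
    (g : ι → (BiquadSpace m n → ℝ)) (hg : ∀ i, IsPolyFun (g i)) :
    {p : BiquadSpace m n | ∀ (x : Fin m → ℝ) (y : Fin n → ℝ),
        0 ≤ eval (Sum.elim x y) (p : MvPolynomial (Fin m ⊕ Fin n) ℝ)} ≠
      {p : BiquadSpace m n | ∀ i, 0 ≤ g i p} := by
  intro hEq
  -- the elements of the space
  set W0 : BiquadSpace m n := ⟨w0raw hm hn, w0mem hm hn⟩ with hW0
  set W1 : BiquadSpace m n := ⟨w1raw hm hn, w1mem hm hn⟩ with hW1
  set WC : BiquadSpace m n := ⟨wCraw hm hn, wCmem hm hn⟩ with hWC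
  set Γ : ℝ → ℝ → BiquadSpace m n := fun t s => W0 + t • W1 + (t^2 - s) • WC with hΓ
  have hΓcoe : ∀ t s, ((Γ t s : BiquadSpace m n) : MvPolynomial (Fin m ⊕ Fin n) ℝ)
      = w0raw hm hn + t • w1raw hm hn + (t^2 - s) • wCraw hm hn := by
    intro t s; simp [hΓ, hW0, hW1, hWC]
  have hadbc : ∀ (x : Fin m → ℝ) (y : Fin n → ℝ),
      (x (i0 hm) * y (i0 hn)) * (x (i1 hm) * y (i1 hn))
        = (x (i0 hm) * y (i1 hn)) * (x (i1 hm) * y (i0 hn)) := by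
    intro x y; ring
  -- membership of the branches in the nonnegativity set
  have hmem1 : ∀ t s : ℝ, -1 < t → t < 0 → |s| ≤ t^2/2 →
      Γ t s ∈ {p : BiquadSpace m n | ∀ (x : Fin m → ℝ) (y : Fin n → ℝ),
        0 ≤ eval (Sum.elim x y) (p : MvPolynomial (Fin m ⊕ Fin n) ℝ)} := by
    intro t s ht1 ht0 hs x y
    rw [hΓcoe, evalRaw hm hn]
    rcases le_or_gt s 0 with hs0 | hs0
    · have h1 : (0:ℝ) ≤ -s * (x (i0 hm) * y (i0 hn))^2 := by
        apply mul_nonneg (by linarith) (sq_nonneg _)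
      nlinarith [sq_nonneg (x (i1 hm) * y (i1 hn) - t * (x (i0 hm) * y (i0 hn))),
        sq_nonneg (x (i0 hm) * y (i1 hn) - x (i1 hm) * y (i0 hn))]
    · have key := ineqKey (-t) s (x (i0 hm) * y (i0 hn)) (x (i0 hm) * y (i1 hn))
        (x (i1 hm) * y (i0 hn)) (x (i1 hm) * y (i1 hn))
        (by linarith) (by linarith) (le_of_lt hs0)
        (by rw [abs_of_pos hs0] at hs; nlinarith)
        (hadbc x y)
      nlinarith [key]
  have hmem2 : ∀ t s : ℝ, s ≤ 0 →
      Γ t s ∈ {p : BiquadSpace m n | ∀ (x : Fin m → ℝ) (y : Fin n → ℝ),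
        0 ≤ eval (Sum.elim x y) (p : MvPolynomial (Fin m ⊕ Fin n) ℝ)} := by
    intro t s hs0 x y
    rw [hΓcoe, evalRaw hm hn]
    nlinarith [sq_nonneg (x (i1 hm) * y (i1 hn) - t * (x (i0 hm) * y (i0 hn))),
      sq_nonneg (x (i0 hm) * y (i1 hn) - x (i1 hm) * y (i0 hn)),
      mul_nonneg (by linarith : (0:ℝ) ≤ -s) (sq_nonneg (x (i0 hm) * y (i0 hn)))]
  -- the witness point evaluation
  have hout : ∀ t s : ℝ, 0 ≤ t → ∃ (x : Fin m → ℝ) (y : Fin n → ℝ),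
      eval (Sum.elim x y) ((Γ t s : BiquadSpace m n) : MvPolynomial (Fin m ⊕ Fin n) ℝ) = -s := by
    intro t s ht
    refine ⟨fun i => if i = i0 hm then 1 else if i = i1 hm then Real.sqrt t else 0,
      fun j => if j = i0 hn then 1 else if j = i1 hn then Real.sqrt t else 0, ?_⟩
    rw [hΓcoe, evalRaw hm hn]
    have h01m : i1 hm ≠ i0 hm := by simp [i0, i1, Fin.ext_iff]
    have h01n : i1 hn ≠ i0 hn := by simp [i0, i1, Fin.ext_iff]
    simp only [if_pos rfl, if_neg h01m, if_neg h01n, if_true]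
    rw [Real.mul_self_sqrt ht]
    ring
  classical
  choose k φ Q hQ using hg
  set r : ∀ i, Fin (k i) → Polynomial (Polynomial ℝ) := fun i j =>
    Polynomial.C (Polynomial.C (φ i j W0) + Polynomial.C (φ i j W1) * Polynomial.X
      + Polynomial.C (φ i j WC) * Polynomial.X ^ 2)
    - Polynomial.C (Polynomial.C (φ i j WC)) * Polynomial.X with hr
  have hEr : ∀ i (j : Fin (k i)) (t s : ℝ), EE t s (r i j) = φ i j (Γ t s) := by
    intro i j t s
    have h1 : φ i j (Γ t s) = φ i j W0 + t * φ i j W1 + (t^2 - s) * φ i j WC := by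
      rw [hΓ]; simp [map_add, map_smul, smul_eq_mul]
    rw [h1, hr]
    simp [EE]
    ring
  have hEq2 : ∀ i (t s : ℝ), EE t s (MvPolynomial.aeval (r i) (Q i)) = g i (Γ t s) := by
    intro i t s
    rw [hQ i (Γ t s), EE_aeval]
    have hfe : (fun j => EE t s (r i j)) = fun j => φ i j (Γ t s) :=
      funext fun j => hEr i j t s
    rw [hfe]
  have hH : ∀ i, ∃ t₀ > (0:ℝ), ∀ t, 0 < t → t < t₀ →
      ∃ δ > (0:ℝ), ∀ s, 0 < s → s < δ → 0 ≤ EE t s (MvPolynomial.aeval (r i) (Q i)) := by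
    intro i
    apply keyFan
    · intro t s ht1 ht0 hs
      rw [hEq2]
      have hmem := hmem1 t s ht1 ht0 hs
      rw [hEq] at hmem
      exact hmem i
    · intro t s _ _ _ hs0
      rw [hEq2]
      have hmem := hmem2 t s hs0
      rw [hEq] at hmem
      exact hmem i
  choose t₀ ht₀pos ht₀ using hH
  rcases isEmpty_or_nonempty ι with hι | hι
  · have hmemout : Γ (1/2) (1/2) ∈ {p : BiquadSpace m n | ∀ i, 0 ≤ g i p} :=
      fun i => (hι.false i).elim
    rw [← hEq] at hmemout
    rcases hout (1/2) (1/2) (by norm_num) with ⟨x, y, hxy⟩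
    have hval := hmemout x y
    rw [hxy] at hval
    linarith
  · haveI := hι
    set T0 := Finset.univ.inf' Finset.univ_nonempty t₀ with hT0
    have hT0pos : 0 < T0 := by
      rw [hT0, Finset.lt_inf'_iff]
      exact fun i _ => ht₀pos i
    set t := min (1/2 : ℝ) (T0/2) with htdef
    have htpos : 0 < t := lt_min (by norm_num) (by linarith)
    have htlt : ∀ i, t < t₀ i := by
      intro i
      have h1 : T0 ≤ t₀ i := Finset.inf'_le _ (Finset.mem_univ i)
      have h2 : t ≤ T0/2 := min_le_right _ _
      linarith
    choose δ hδpos hδ using fun i => ht₀ i t htpos (htlt i)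
    set D0 := Finset.univ.inf' Finset.univ_nonempty δ with hD0
    have hD0pos : 0 < D0 := by
      rw [hD0, Finset.lt_inf'_iff]
      exact fun i _ => hδpos i
    set s := D0/2 with hsdef
    have hspos : 0 < s := by rw [hsdef]; linarith
    have hsi : ∀ i, s < δ i := by
      intro i
      have h1 : D0 ≤ δ i := Finset.inf'_le _ (Finset.mem_univ i)
      rw [hsdef]; linarith
    have hmemR : Γ t s ∈ {p : BiquadSpace m n | ∀ i, 0 ≤ g i p} := by
      intro i
      have hv := hδ i s hspos (hsi i)
      rw [hEq2] at hv
      exact hv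
    rw [← hEq] at hmemR
    rcases hout t s (le_of_lt htpos) with ⟨x, y, hxy⟩
    have hval := hmemR x y
    rw [hxy] at hval
    linarith


section PartB
open Polynomial


variable {N : ℕ}

noncomputable def charLike (M : Matrix (Fin N) (Fin N) ℝ) : Polynomial ℝ :=
  (M.map Polynomial.C + Matrix.diagonal (fun _ => (Polynomial.X : Polynomial ℝ))).det

theorem charLike_eval (M : Matrix (Fin N) (Fin N) ℝ) (u : ℝ) :
    (charLike M).eval u = (M + u • 1).det := by
  unfold charLike
  rw [← Polynomial.coe_evalRingHom, RingHom.map_det]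
  congr 1
  ext i j
  by_cases h : i = j
  · subst h
    simp [Matrix.map_apply, Matrix.diagonal_apply_eq, Matrix.one_apply_eq]
  · simp [Matrix.map_apply, Matrix.diagonal_apply_ne _ h, Matrix.one_apply_ne h]

theorem charLike_hermitian {M : Matrix (Fin N) (Fin N) ℝ} (hM : M.IsHermitian) :
    charLike M = ∏ i : Fin N, (Polynomial.X + Polynomial.C (hM.eigenvalues i)) := by
  apply Polynomial.funext
  intro u
  rw [charLike_eval]
  have hU := hM.spectral_theorem
  set U : Matrix (Fin N) (Fin N) ℝ := (hM.eigenvectorUnitary : Matrix (Fin N) (Fin N) ℝ)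
    with hUdef
  have hUU : U * star U = 1 := by
    have h := hM.eigenvectorUnitary.2
    rw [Matrix.mem_unitaryGroup_iff] at h
    exact h
  set D : Matrix (Fin N) (Fin N) ℝ := Matrix.diagonal (RCLike.ofReal ∘ hM.eigenvalues) with hD
  have h1 : U * (D + u • 1) * star U = M + u • 1 := by
    rw [mul_add, add_mul, hU, Unitary.conjStarAlgAut_apply]
    congr 1
    have h2 : U * (u • (1 : Matrix (Fin N) (Fin N) ℝ)) = u • U := by
      rw [mul_smul_comm, mul_one]
    rw [h2, smul_mul_assoc, hUU]
  have h3 : (M + u • 1).det = (D + u • 1).det := by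
    rw [← h1, Matrix.det_mul, Matrix.det_mul]
    have : U.det * (D + u • 1).det * (star U).det
        = (D + u • 1).det * (U.det * (star U).det) := by ring
    rw [this, ← Matrix.det_mul, hUU, Matrix.det_one, mul_one]
  rw [h3, hD]
  rw [Matrix.smul_one_eq_diagonal]
  rw [Matrix.diagonal_add, Matrix.det_diagonal]
  rw [Polynomial.eval_prod]
  apply Finset.prod_congr rfl
  intro i _
  simp [RCLike.ofReal_real_eq_id]
  ring

theorem coeff_prod_nonneg {ι : Type*} [DecidableEq ι] (s : Finset ι) (c : ι → ℝ) (hc : ∀ i ∈ s, 0 ≤ c i)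
    (k : ℕ) : 0 ≤ (∏ i ∈ s, (Polynomial.X + Polynomial.C (c i))).coeff k := by
  induction s using Finset.induction_on generalizing k with
  | empty =>
    simp only [Finset.prod_empty, Polynomial.coeff_one]
    split <;> norm_num
  | insert a s' hnotmem ih =>
    rw [Finset.prod_insert hnotmem, add_mul]
    have hca : 0 ≤ c a := hc a (Finset.mem_insert_self a s')
    have hc' : ∀ i ∈ s', 0 ≤ c i := fun i hi => hc i (Finset.mem_insert_of_mem hi)
    rcases k with _ | k
    · rw [Polynomial.coeff_add, Polynomial.coeff_X_mul_zero, Polynomial.coeff_C_mul]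
      have := ih hc' 0
      positivity
    · rw [Polynomial.coeff_add, Polynomial.coeff_X_mul, Polynomial.coeff_C_mul]
      have h1 := ih hc' k
      have h2 := ih hc' (k+1)
      positivity

theorem psd_coeff_nonneg {M : Matrix (Fin N) (Fin N) ℝ} (hP : M.PosSemidef) (k : ℕ) :
    0 ≤ (charLike M).coeff k := by
  classical
  rw [charLike_hermitian hP.1]
  exact coeff_prod_nonneg Finset.univ _ (fun i _ => hP.eigenvalues_nonneg i) k

theorem psd_of_coeffs {M : Matrix (Fin N) (Fin N) ℝ} (hM : M.IsHermitian)
    (h : ∀ k, k ≤ N → 0 ≤ (charLike M).coeff k) : M.PosSemidef := by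
  classical
  have heig : ∀ i, 0 ≤ hM.eigenvalues i := by
    by_contra hcon
    push_neg at hcon
    obtain ⟨i, hi⟩ := hcon
    set u := -(hM.eigenvalues i) with hu
    have hupos : 0 < u := by rw [hu]; linarith
    have hzero : (charLike M).eval u = 0 := by
      rw [charLike_hermitian hM, Polynomial.eval_prod]
      apply Finset.prod_eq_zero (Finset.mem_univ i)
      simp [hu]
    have hmonic : (charLike M).Monic := by
      rw [charLike_hermitian hM]
      exact Polynomial.monic_prod_of_monic _ _ (fun i _ => Polynomial.monic_X_add_C _)
    have hdeg : (charLike M).natDegree = N := by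
      rw [charLike_hermitian hM, Polynomial.natDegree_prod]
      · simp [Polynomial.natDegree_X_add_C]
      · intro i _
        exact Polynomial.X_add_C_ne_zero _
    have heval : (charLike M).eval u
        = ∑ j ∈ Finset.range (N + 1), (charLike M).coeff j * u ^ j := by
      rw [Polynomial.eval_eq_sum_range, hdeg]
    have hterm : ∀ j ∈ Finset.range (N+1), 0 ≤ (charLike M).coeff j * u ^ j := by
      intro j hj
      rw [Finset.mem_range] at hj
      exact mul_nonneg (h j (by omega)) (by positivity)
    have hsingle : (charLike M).coeff N * u ^ N
        ≤ ∑ j ∈ Finset.range (N + 1), (charLike M).coeff j * u ^ j :=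
      Finset.single_le_sum hterm (by simp)
    have hcN : (charLike M).coeff N = 1 := by
      have := hmonic
      rw [Polynomial.Monic, Polynomial.leadingCoeff, hdeg] at this
      exact this
    rw [hcN, one_mul] at hsingle
    rw [heval] at hzero
    have hpow : (0:ℝ) < u ^ N := by positivity
    linarith
  have hdiag : (Matrix.diagonal (RCLike.ofReal ∘ hM.eigenvalues)
      : Matrix (Fin N) (Fin N) ℝ).PosSemidef := by
    rw [Matrix.posSemidef_diagonal_iff]
    intro i
    simpa [RCLike.ofReal_real_eq_id] using heig i
  have hfin := hdiag.mul_mul_conjTranspose_same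
    ((hM.eigenvectorUnitary : Matrix (Fin N) (Fin N) ℝ))
  rw [← Matrix.star_eq_conjTranspose, ← Unitary.conjStarAlgAut_apply (S := ℝ), ← hM.spectral_theorem] at hfin
  exact hfin

noncomputable def DkPoly (N k : ℕ) : MvPolynomial (Fin N × Fin N) ℝ :=
  (Matrix.det (Matrix.of (fun i j : Fin N =>
      Polynomial.C (MvPolynomial.X (i,j)) + if i = j then Polynomial.X else 0)
      : Matrix (Fin N) (Fin N) (Polynomial (MvPolynomial (Fin N × Fin N) ℝ)))).coeff k

theorem DkPoly_eval (N k : ℕ) (M : Matrix (Fin N) (Fin N) ℝ) :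
    MvPolynomial.eval (fun v : Fin N × Fin N => M v.1 v.2) (DkPoly N k)
      = (charLike M).coeff k := by
  classical
  set f : MvPolynomial (Fin N × Fin N) ℝ →+* ℝ :=
    (MvPolynomial.eval (fun v : Fin N × Fin N => M v.1 v.2)) with hf
  have hmap : (Polynomial.mapRingHom f) (Matrix.det (Matrix.of (fun i j : Fin N =>
      Polynomial.C (MvPolynomial.X (i,j)) + if i = j then Polynomial.X else 0)))
      = charLike M := by
    rw [RingHom.map_det]
    congr 1
    ext i j
    by_cases h : i = j
    · subst h
      simp [charLike, Matrix.map_apply, Matrix.diagonal_apply_eq, hf]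
    · simp [charLike, Matrix.map_apply, Matrix.diagonal_apply_ne _ h, h, hf]
  have hco := congrArg (fun p => p.coeff k) hmap
  simpa [Polynomial.coeff_map, DkPoly] using hco

end PartB

/-- For `m, n ≥ 2` the cone `P` of nonnegative biquadratic forms (canonically identified
with `Hom(S₊(V), S₊(W*))`) is not a basic closed semialgebraic subset of the space of
biquadratic forms: it is not the set of simultaneous nonnegativity of finitely many
polynomial functions in the coefficients.  In particular it is not a spectrahedron. -/
theorem nonneg_biquadratics_not_basic_closed_semialgebraic (m n : ℕ) (hm : 2 ≤ m) (hn : 2 ≤ n) :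
    (¬ ∃ (k : ℕ) (g : Fin k → (BiquadSpace m n → ℝ)),
      (∀ i, IsPolyFun (g i)) ∧
      {p : BiquadSpace m n | ∀ (x : Fin m → ℝ) (y : Fin n → ℝ),
          0 ≤ eval (Sum.elim x y) (p : MvPolynomial (Fin m ⊕ Fin n) ℝ)} =
        {p : BiquadSpace m n | ∀ i, 0 ≤ g i p}) ∧
    ¬ ∃ (N : ℕ) (ψ : BiquadSpace m n →ₗ[ℝ] Matrix (Fin N) (Fin N) ℝ),
      Function.Injective ψ ∧
      {p : BiquadSpace m n | ∀ (x : Fin m → ℝ) (y : Fin n → ℝ),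
          0 ≤ eval (Sum.elim x y) (p : MvPolynomial (Fin m ⊕ Fin n) ℝ)} =
        {p : BiquadSpace m n | (ψ p).PosSemidef} := by
  constructor
  · rintro ⟨k, g, hpoly, hset⟩
    exact master m n hm hn (Fin k) g hpoly hset
  · rintro ⟨N, ψ, hinj, hset⟩
    classical
    let L : (Fin N × Fin N) → (BiquadSpace m n →ₗ[ℝ] ℝ) := fun v =>
      { toFun := fun p => ψ p v.1 v.2
        map_add' := by intro a b; simp [map_add, Matrix.add_apply]
        map_smul' := by intro c a; simp [map_smul, Matrix.smul_apply] }
    let G : (((Fin N × Fin N) ⊕ (Fin N × Fin N)) ⊕ (Fin (N+1))) → (BiquadSpace m n → ℝ) :=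
      fun i =>
      match i with
      | Sum.inl (Sum.inl v) => fun p => ψ p v.1 v.2 - ψ p v.2 v.1
      | Sum.inl (Sum.inr v) => fun p => ψ p v.2 v.1 - ψ p v.1 v.2
      | Sum.inr kk => fun p => (charLike (ψ p)).coeff kk
    have hGpoly : ∀ i, IsPolyFun (G i) := by
      rintro ((v | v) | kk)
      · refine ⟨1, fun _ => L v - L (v.2, v.1), MvPolynomial.X 0, fun w => ?_⟩
        simp [G, L]
      · refine ⟨1, fun _ => L (v.2, v.1) - L v, MvPolynomial.X 0, fun w => ?_⟩
        simp [G, L]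
      · refine ⟨N*N, fun j => L (finProdFinEquiv.symm j),
          MvPolynomial.rename finProdFinEquiv (DkPoly N kk), fun w => ?_⟩
        rw [MvPolynomial.eval_rename]
        have hfe : ((fun j => (L (finProdFinEquiv.symm j)) w) ∘ finProdFinEquiv)
            = fun v : Fin N × Fin N => (ψ w) v.1 v.2 := by
          funext v
          show (L (finProdFinEquiv.symm (finProdFinEquiv v))) w = _
          rw [Equiv.symm_apply_apply]
          simp only [L, LinearMap.coe_mk, AddHom.coe_mk]
        rw [hfe, DkPoly_eval]
    have hsetEq : {p : BiquadSpace m n | (ψ p).PosSemidef}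
        = {p : BiquadSpace m n | ∀ i, 0 ≤ G i p} := by
      ext p
      constructor
      · intro hp
        rintro ((v | v) | kk)
        · have h := hp.1.apply v.2 v.1
          simp only [star_trivial] at h
          simp only [G, Set.mem_setOf_eq]
          linarith
        · have h := hp.1.apply v.1 v.2
          simp only [star_trivial] at h
          simp only [G, Set.mem_setOf_eq]
          linarith
        · exact psd_coeff_nonneg hp kk
      · intro hp
        have hsym : ∀ i j, (ψ p) i j = (ψ p) j i := by
          intro i j
          have h1 := hp (Sum.inl (Sum.inl (i, j)))
          have h2 := hp (Sum.inl (Sum.inr (i, j)))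
          simp only [G, Set.mem_setOf_eq] at h1 h2
          linarith
        have hherm : (ψ p).IsHermitian := by
          rw [Matrix.IsHermitian]
          ext i j
          rw [Matrix.conjTranspose_apply, star_trivial]
          exact hsym j i
        apply psd_of_coeffs hherm
        intro k hk
        have h3 := hp (Sum.inr ⟨k, by omega⟩)
        simpa [G] using h3
    exact master m n hm hn _ G hGpoly (hset.trans hsetEq)
end

section
/- Let V and W be finite-dimensional real vector spaces, let n > 0 be an integer, let P ⊆ V be a compact convex set, let E ⊆ P be the set of extreme points of P, and let h : Vⁿ → W be a multilinear map. Then the convex hull of h(P × ⋯ × P) (n factors) equals the convex hull of h(E × ⋯ × E). -/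
open Module Set

lemma aux_isCompact_convexHull {V : Type*} [NormedAddCommGroup V] [NormedSpace ℝ V]
    [FiniteDimensional ℝ V] {s : Set V} (hs : IsCompact s) :
    IsCompact (convexHull ℝ s) := by
  classical
  rcases s.eq_empty_or_nonempty with rfl | ⟨z0, hz0⟩
  · simp
  set d := finrank ℝ V + 1 with hd
  set f : (Fin d → ℝ) × (Fin d → V) → V := fun p => ∑ i, p.1 i • p.2 i with hf
  have hfc : Continuous f := continuous_finset_sum _ fun i _ =>
    ((continuous_apply i).comp continuous_fst).smul ((continuous_apply i).comp continuous_snd)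
  have hK : IsCompact ((stdSimplex ℝ (Fin d)) ×ˢ (Set.univ.pi fun _ : Fin d => s)) :=
    (isCompact_stdSimplex (𝕜 := ℝ) (ι := Fin d)).prod (isCompact_univ_pi fun _ => hs)
  have himg : convexHull ℝ s = f '' ((stdSimplex ℝ (Fin d)) ×ˢ (Set.univ.pi fun _ : Fin d => s)) := by
    apply Set.Subset.antisymm
    · intro x hx
      obtain ⟨ι, hι, z, w, hzs, hai, hwpos, hwsum, hwz⟩ :=
        eq_pos_convex_span_of_mem_convexHull hx
      have hcard : Fintype.card ι ≤ d := by
        calc Fintype.card ι ≤ finrank ℝ (vectorSpan ℝ (Set.range z)) + 1 :=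
              hai.card_le_finrank_succ
        _ ≤ d := by
              have := Submodule.finrank_le (vectorSpan ℝ (Set.range z))
              omega
      obtain ⟨e⟩ : Nonempty (ι ↪ Fin d) := by
        rwa [Function.Embedding.nonempty_iff_card_le, Fintype.card_fin]
      set w' : Fin d → ℝ := Function.extend e w fun _ => 0 with hw'
      set z' : Fin d → V := Function.extend e z fun _ => z0 with hz'
      have hwe : ∀ i, w' (e i) = w i := fun i => e.injective.extend_apply _ _ _
      have hze : ∀ i, z' (e i) = z i := fun i => e.injective.extend_apply _ _ _
      have keyR : ∀ (F : ℝ → V → ℝ),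
          (∀ j, ¬ (∃ i, e i = j) → F (w' j) (z' j) = 0) →
          ∑ j, F (w' j) (z' j) = ∑ i, F (w i) (z i) := by
        intro F hF
        have h1 : ∑ j, F (w' j) (z' j) = ∑ j ∈ Finset.univ.image e, F (w' j) (z' j) := by
          refine (Finset.sum_subset (Finset.subset_univ _) ?_).symm
          intro j _ hj
          apply hF
          rintro ⟨i, rfl⟩
          exact hj (Finset.mem_image.2 ⟨i, Finset.mem_univ _, rfl⟩)
        rw [h1, Finset.sum_image (fun a _ b _ h => e.injective h)]
        exact Finset.sum_congr rfl fun i _ => by rw [hwe, hze]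
      have keyV : ∀ (F : ℝ → V → V),
          (∀ j, ¬ (∃ i, e i = j) → F (w' j) (z' j) = 0) →
          ∑ j, F (w' j) (z' j) = ∑ i, F (w i) (z i) := by
        intro F hF
        have h1 : ∑ j, F (w' j) (z' j) = ∑ j ∈ Finset.univ.image e, F (w' j) (z' j) := by
          refine (Finset.sum_subset (Finset.subset_univ _) ?_).symm
          intro j _ hj
          apply hF
          rintro ⟨i, rfl⟩
          exact hj (Finset.mem_image.2 ⟨i, Finset.mem_univ _, rfl⟩)
        rw [h1, Finset.sum_image (fun a _ b _ h => e.injective h)]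
        exact Finset.sum_congr rfl fun i _ => by rw [hwe, hze]
      refine ⟨(w', z'), ⟨?_, ?_⟩, ?_⟩
      · constructor
        · intro j
          show 0 ≤ w' j
          rcases em (∃ i, e i = j) with ⟨i, rfl⟩ | hj
          · rw [hwe]; exact (hwpos i).le
          · rw [hw', Function.extend_apply' _ _ _ hj]
        · show ∑ j, w' j = 1
          calc ∑ j, w' j = ∑ j, (fun (a : ℝ) (_ : V) => a) (w' j) (z' j) := rfl
          _ = ∑ i, (fun (a : ℝ) (_ : V) => a) (w i) (z i) := keyR (fun a _ => a) (fun j hj => by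
                show w' j = 0
                rw [hw', Function.extend_apply' _ _ _ hj])
          _ = 1 := hwsum
      · intro j _
        show z' j ∈ s
        rcases em (∃ i, e i = j) with ⟨i, rfl⟩ | hj
        · rw [hze]; exact hzs ⟨i, rfl⟩
        · rw [hz', Function.extend_apply' _ _ _ hj]; exact hz0
      · show ∑ j, w' j • z' j = x
        rw [keyV (fun a b => a • b) (fun j hj => by
          show w' j • z' j = 0
          rw [hw', Function.extend_apply' _ _ _ hj]
          simp), hwz]
    · rintro x ⟨⟨w, z⟩, ⟨hwmem, hzmem⟩, rfl⟩
      apply (convex_convexHull ℝ s).sum_mem (fun i _ => hwmem.1 i) hwmem.2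
      exact fun i _ => subset_convexHull ℝ s (hzmem i (Set.mem_univ i))
  rw [himg]
  exact hK.image hfc

lemma aux_multilinear_hull {V W : Type*} [NormedAddCommGroup V] [NormedSpace ℝ V]
    [AddCommGroup W] [Module ℝ W] {n : ℕ} (h : MultilinearMap ℝ (fun _ : Fin n => V) W)
    (S : Set V) :
    ∀ (k : ℕ) (v : Fin n → V), (∀ i : Fin n, (i : ℕ) < k → v i ∈ convexHull ℝ S) →
      (∀ i : Fin n, k ≤ (i : ℕ) → v i ∈ S) →
      h v ∈ convexHull ℝ ((fun v : Fin n → V => h v) '' {v | ∀ i, v i ∈ S}) := by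
  classical
  intro k
  induction k with
  | zero =>
    intro v _ h2
    exact subset_convexHull ℝ _ ⟨v, fun i => h2 i (Nat.zero_le _), rfl⟩
  | succ k IH =>
    intro v h1 h2
    by_cases hk : k < n
    · set ik : Fin n := ⟨k, hk⟩ with hik
      have hvk : v ik ∈ convexHull ℝ S := h1 ik (Nat.lt_succ_self k)
      have key : h v = (h.toLinearMap v ik) (v ik) := by
        rw [MultilinearMap.toLinearMap_apply, Function.update_eq_self]
      have himg : (h.toLinearMap v ik) (v ik) ∈ (h.toLinearMap v ik) '' (convexHull ℝ S) :=
        ⟨_, hvk, rfl⟩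
      rw [LinearMap.image_convexHull] at himg
      have hsub : (h.toLinearMap v ik) '' S ⊆
          convexHull ℝ ((fun v : Fin n → V => h v) '' {v | ∀ i, v i ∈ S}) := by
        rintro _ ⟨z, hz, rfl⟩
        rw [MultilinearMap.toLinearMap_apply]
        apply IH
        · intro i hi
          rw [Function.update_of_ne (Fin.ne_of_val_ne (show (i : ℕ) ≠ k by omega))]
          exact h1 i (Nat.lt_succ_of_lt hi)
        · intro i hi
          rcases eq_or_ne i ik with rfl | hne
          · rwa [Function.update_self]
          · rw [Function.update_of_ne hne]
            have : (i : ℕ) ≠ k := fun hh => hne (Fin.ext hh)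
            exact h2 i (by omega)
      rw [key]
      exact convexHull_min hsub (convex_convexHull ℝ _) himg
    · exact IH v (fun i hi => h1 i (by omega)) (fun i hi => absurd i.isLt (by omega))
open Module Set

universe u

lemma aux_minkowski (d : ℕ) : ∀ (V : Type u) [NormedAddCommGroup V] [NormedSpace ℝ V]
    [FiniteDimensional ℝ V], finrank ℝ V ≤ d → ∀ P : Set V, IsCompact P → Convex ℝ P →
    P ⊆ convexHull ℝ (P.extremePoints ℝ) := by
  induction d with
  | zero =>
    intro V _ _ _ hd P _ _ x hx
    have hss : Subsingleton V := finrank_zero_iff.1 (Nat.le_zero.1 hd)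
    refine subset_convexHull ℝ _ ?_
    exact mem_extremePoints.2 ⟨hx, fun x₁ h₁ x₂ h₂ _ =>
      ⟨Subsingleton.elim _ _, Subsingleton.elim _ _⟩⟩
  | succ d IH =>
    intro V instN instS instF hd P hPc hPv
    -- the "flat" case: interior empty, pass to a lower-dimensional subspace
    have flat : ∀ Q : Set V, IsCompact Q → Convex ℝ Q → interior Q = ∅ →
        Q ⊆ convexHull ℝ (Q.extremePoints ℝ) := by
      intro Q hQc hQv hQi y hy
      have hspan : affineSpan ℝ Q ≠ ⊤ := by
        intro htop
        rw [← hQv.interior_nonempty_iff_affineSpan_eq_top, hQi] at htop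
        exact Set.not_nonempty_empty htop
      set U := (affineSpan ℝ Q).direction with hUdef
      have hUne : U ≠ ⊤ := by
        intro htop
        exact hspan ((AffineSubspace.direction_eq_top_iff_of_nonempty
          ⟨y, subset_affineSpan ℝ Q hy⟩).1 htop)
      have hUd : finrank ℝ U ≤ d := by
        have h1 : finrank ℝ U < finrank ℝ V := Submodule.finrank_lt hUne
        omega
      have hQmem : ∀ p ∈ Q, p - y ∈ U := fun p hp =>
        AffineSubspace.vsub_mem_direction (subset_affineSpan ℝ Q hp) (subset_affineSpan ℝ Q hy)
      set Q' : Set U := {u : U | ((u : V) + y) ∈ Q} with hQ'def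
      have hgc : Continuous fun u : U => (u : V) + y :=
        continuous_subtype_val.add continuous_const
      have hQ'c : IsCompact Q' := by
        rw [Metric.isCompact_iff_isClosed_bounded]
        constructor
        · exact hQc.isClosed.preimage hgc
        · obtain ⟨R, hR⟩ := isBounded_iff_forall_norm_le.1 hQc.isBounded
          refine isBounded_iff_forall_norm_le.2 ⟨R + ‖y‖, fun u hu => ?_⟩
          have h1 := hR _ hu
          calc ‖u‖ = ‖((u : V) + y) - y‖ := by rw [add_sub_cancel_right]; rfl
          _ ≤ ‖(u : V) + y‖ + ‖y‖ := norm_sub_le _ _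
          _ ≤ R + ‖y‖ := by linarith
      have hQ'v : Convex ℝ Q' := by
        intro u hu v hv s t hs ht hst
        show ((↑(s • u + t • v) : V) + y) ∈ Q
        have hyy : s • y + t • y = y := by rw [← add_smul, hst, one_smul]
        have : (↑(s • u + t • v) : V) + y = s • ((u : V) + y) + t • ((v : V) + y) := by
          push_cast
          rw [smul_add, smul_add]
          rw [show s • (u : V) + s • y + (t • (v : V) + t • y)
            = s • (u : V) + t • (v : V) + (s • y + t • y) by abel, hyy]
        rw [this]
        exact hQv hu hv hs ht hst
      have h0 : (0 : U) ∈ Q' := by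
        show ((0 : U) : V) + y ∈ Q
        simpa using hy
      have h0hull := IH U hUd Q' hQ'c hQ'v h0
      -- affine map g
      set g : U →ᵃ[ℝ] V :=
        { toFun := fun u => (u : V) + y
          linear := U.subtype
          map_vadd' := fun p v => by
            show ((↑(v + p) : V) + y) = (v : V) + ((p : V) + y)
            push_cast
            abel } with hgdef
      have hyg : y = g 0 := by simp [hgdef]
      have himg : g '' (convexHull ℝ (Q'.extremePoints ℝ))
          = convexHull ℝ (g '' (Q'.extremePoints ℝ)) := g.image_convexHull _
      have hext : g '' (Q'.extremePoints ℝ) ⊆ Q.extremePoints ℝ := by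
        rintro _ ⟨u, hu, rfl⟩
        rw [mem_extremePoints] at hu ⊢
        refine ⟨hu.1, ?_⟩
        intro p₁ hp₁ p₂ hp₂ hseg
        obtain ⟨s, t, hs, ht, hst, hsum⟩ := hseg
        set u₁ : U := ⟨p₁ - y, hQmem _ hp₁⟩ with hu₁
        set u₂ : U := ⟨p₂ - y, hQmem _ hp₂⟩ with hu₂
        have hu₁Q : u₁ ∈ Q' := by show (p₁ - y) + y ∈ Q; rwa [sub_add_cancel]
        have hu₂Q : u₂ ∈ Q' := by show (p₂ - y) + y ∈ Q; rwa [sub_add_cancel]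
        have husg : u ∈ openSegment ℝ u₁ u₂ := by
          refine ⟨s, t, hs, ht, hst, ?_⟩
          apply Subtype.ext
          show s • (p₁ - y) + t • (p₂ - y) = (u : V)
          have hyy : s • y + t • y = y := by rw [← add_smul, hst, one_smul]
          have hgu : s • p₁ + t • p₂ = (u : V) + y := hsum
          rw [smul_sub, smul_sub, show s • p₁ - s • y + (t • p₂ - t • y)
            = (s • p₁ + t • p₂) - (s • y + t • y) by abel, hyy, hgu, add_sub_cancel_right]
        obtain ⟨he₁, he₂⟩ := hu.2 u₁ hu₁Q u₂ hu₂Q husg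
        constructor
        · show p₁ = (u : V) + y
          rw [← he₁]; show p₁ = (p₁ - y) + y; rw [sub_add_cancel]
        · show p₂ = (u : V) + y
          rw [← he₂]; show p₂ = (p₂ - y) + y; rw [sub_add_cancel]
      rw [hyg]
      have : g 0 ∈ g '' (convexHull ℝ (Q'.extremePoints ℝ)) := ⟨0, h0hull, rfl⟩
      rw [himg] at this
      exact convexHull_mono hext this
    intro x hx
    by_cases hint : (interior P).Nonempty
    · rcases subsingleton_or_nontrivial V with hss | hnt
      · exact subset_convexHull ℝ _ (mem_extremePoints.2 ⟨hx, fun x₁ h₁ x₂ h₂ _ =>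
          ⟨Subsingleton.elim _ _, Subsingleton.elim _ _⟩⟩)
      obtain ⟨z, hz⟩ := hint
      obtain ⟨u, hu⟩ := exists_ne (0 : V)
      -- the boundary lemma
      have bd : ∀ q ∈ P, q ∉ interior P → q ∈ convexHull ℝ (P.extremePoints ℝ) := by
        intro q hq hqi
        obtain ⟨l, hl⟩ := geometric_hahn_banach_open_point hPv.interior isOpen_interior hqi
        have hle : ∀ p ∈ P, l p ≤ l q := by
          intro p hp
          by_contra hlt
          push_neg at hlt
          have hlz : l z < l q := hl z hz
          set t : ℝ := (l p - l q) / (l p - l z) with htdef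
          have hpz : 0 < l p - l z := by linarith
          have ht0 : 0 < t := div_pos (by linarith) hpz
          have ht1 : t < 1 := (div_lt_one hpz).2 (by linarith)
          have hmem : t • z + (1 - t) • p ∈ interior P :=
            hPv.combo_interior_self_mem_interior hz hp ht0 (by linarith) (by ring)
          have := hl _ hmem
          rw [map_add, map_smul, map_smul] at this
          have hexp : t * l z + (1 - t) * l p = l q := by
            field_simp [htdef]
            have h3 : t * (l p - l z) = l p - l q := by rw [htdef, div_mul_cancel₀ _ hpz.ne']
            linarith [h3]
          simp only [smul_eq_mul] at this
          linarith
        set F := {p ∈ P | ∀ r ∈ P, l r ≤ l p} with hFdef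
        have hqF : q ∈ F := ⟨hq, hle⟩
        have hFexp : IsExposed ℝ P F := fun _ => ⟨l, rfl⟩
        have hFc : IsCompact F := hFexp.isCompact hPc
        have hFv : Convex ℝ F := hFexp.convex hPv
        have hlF : ∀ p ∈ F, l p = l q := fun p hp => le_antisymm (hle p hp.1) (hp.2 q hq)
        have hFi : interior F = ∅ := by
          by_contra hne
          rw [← Ne, ← Set.nonempty_iff_ne_empty] at hne
          obtain ⟨w, hw⟩ := hne
          set v := q - z with hvdef
          have hlv : 0 < l v := by
            rw [hvdef, map_sub]
            linarith [hl z hz]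
          have htend : Filter.Tendsto (fun δ : ℝ => w + δ • v) (nhds 0) (nhds w) := by
            have hc : Continuous fun δ : ℝ => w + δ • v :=
              continuous_const.add (continuous_id.smul continuous_const)
            have := hc.tendsto 0
            simpa using this
          have hev : ∀ᶠ δ in nhds (0 : ℝ), w + δ • v ∈ interior F :=
            htend.eventually (isOpen_interior.mem_nhds hw)
          obtain ⟨δ, hδF, hδ0⟩ := ((eventually_nhdsWithin_of_eventually_nhds
            (s := {(0:ℝ)}ᶜ) hev).and (eventually_mem_nhdsWithin)).exists
          have h1 : l (w + δ • v) = l q := hlF _ (interior_subset hδF)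
          have h2 : l w = l q := hlF _ (interior_subset hw)
          rw [map_add, map_smul, h2, smul_eq_mul] at h1
          have : δ * l v = 0 := by linarith
          rcases mul_eq_zero.1 this with h | h
          · exact hδ0 h
          · exact hlv.ne' h
        have hq' := flat F hFc hFv hFi hqF
        exact convexHull_mono (hFexp.isExtreme.extremePoints_subset_extremePoints) hq'
      -- the chord through x in direction u
      set T := {t : ℝ | x + t • u ∈ P} with hTdef
      have hTcont : Continuous fun t : ℝ => x + t • u :=
        continuous_const.add (continuous_id.smul continuous_const)
      have hTc : IsCompact T := by
        rw [Metric.isCompact_iff_isClosed_bounded]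
        refine ⟨hPc.isClosed.preimage hTcont, ?_⟩
        obtain ⟨R, hR⟩ := isBounded_iff_forall_norm_le.1 hPc.isBounded
        refine isBounded_iff_forall_norm_le.2 ⟨(R + ‖x‖) / ‖u‖, fun t ht => ?_⟩
        have hupos : 0 < ‖u‖ := norm_pos_iff.2 hu
        rw [le_div_iff₀ hupos]
        have h1 := hR _ ht
        calc ‖t‖ * ‖u‖ = ‖t • u‖ := (norm_smul t u).symm
        _ = ‖(x + t • u) - x‖ := by rw [add_sub_cancel_left]
        _ ≤ ‖x + t • u‖ + ‖x‖ := norm_sub_le _ _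
        _ ≤ R + ‖x‖ := by linarith
      have h0T : (0 : ℝ) ∈ T := by show x + (0:ℝ) • u ∈ P; simpa using hx
      have hTne : T.Nonempty := ⟨0, h0T⟩
      set a := sInf T with hadef
      set b := sSup T with hbdef
      have haT : a ∈ T := hTc.sInf_mem hTne
      have hbT : b ∈ T := hTc.sSup_mem hTne
      have ha0 : a ≤ 0 := csInf_le hTc.bddBelow h0T
      have hb0 : 0 ≤ b := le_csSup hTc.bddAbove h0T
      -- endpoints are not interior points
      have hnotintb : x + b • u ∉ interior P := by
        intro hmem
        obtain ⟨ε, hε, hball⟩ := Metric.mem_nhds_iff.1 (mem_interior_iff_mem_nhds.1 hmem)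
        set δ := ε / (2 * (‖u‖ + 1)) with hδdef
        have hupos : 0 < ‖u‖ + 1 := by positivity
        have hδpos : 0 < δ := by positivity
        have hmem2 : (b + δ) ∈ T := by
          show x + (b + δ) • u ∈ P
          apply hball
          rw [Metric.mem_ball, dist_eq_norm]
          have : x + (b + δ) • u - (x + b • u) = δ • u := by
            rw [add_smul]; abel
          rw [this, norm_smul, Real.norm_eq_abs, abs_of_pos hδpos]
          have hkey : δ * (‖u‖ + 1) = ε / 2 := by
            rw [hδdef]; field_simp
          calc δ * ‖u‖ < δ * (‖u‖ + 1) := by nlinarith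
          _ = ε / 2 := hkey
          _ < ε := by linarith
        have := le_csSup hTc.bddAbove hmem2
        linarith
      have hnotinta : x + a • u ∉ interior P := by
        intro hmem
        obtain ⟨ε, hε, hball⟩ := Metric.mem_nhds_iff.1 (mem_interior_iff_mem_nhds.1 hmem)
        set δ := ε / (2 * (‖u‖ + 1)) with hδdef
        have hupos : 0 < ‖u‖ + 1 := by positivity
        have hδpos : 0 < δ := by positivity
        have hmem2 : (a - δ) ∈ T := by
          show x + (a - δ) • u ∈ P
          apply hball
          rw [Metric.mem_ball, dist_eq_norm]
          have : x + (a - δ) • u - (x + a • u) = (-δ) • u := by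
            rw [sub_smul]
            rw [neg_smul]
            abel
          rw [this, norm_smul, Real.norm_eq_abs, abs_neg, abs_of_pos hδpos]
          have hkey : δ * (‖u‖ + 1) = ε / 2 := by
            rw [hδdef]; field_simp
          calc δ * ‖u‖ < δ * (‖u‖ + 1) := by nlinarith
          _ = ε / 2 := hkey
          _ < ε := by linarith
        have := csInf_le hTc.bddBelow hmem2
        linarith
      have hpa := bd _ haT hnotinta
      have hpb := bd _ hbT hnotintb
      -- x is on the segment between the endpoints
      have hseg : x ∈ segment ℝ (x + a • u) (x + b • u) := by
        have h0seg : (0 : ℝ) ∈ segment ℝ a b := by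
          rw [segment_eq_Icc (ha0.trans hb0)]
          exact ⟨ha0, hb0⟩
        obtain ⟨s, t, hs, ht, hst, hsum⟩ := h0seg
        refine ⟨s, t, hs, ht, hst, ?_⟩
        simp only [smul_eq_mul] at hsum
        rw [smul_add, smul_add, smul_smul, smul_smul,
          show s • x + (s * a) • u + (t • x + (t * b) • u)
            = (s • x + t • x) + ((s * a) • u + (t * b) • u) by abel,
          ← add_smul, ← add_smul, hst, hsum, one_smul, zero_smul, add_zero]
      exact (convex_convexHull ℝ _).segment_subset hpa hpb hseg
    · rw [Set.not_nonempty_iff_eq_empty] at hint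
      exact flat P hPc hPv hint hx

/-- Let `P ⊆ V` be a compact convex set in a finite-dimensional real vector space, `E` its
set of extreme points, and `h : Vⁿ → W` a multilinear map into a finite-dimensional real
vector space.  Then the convex hull of `h(P × ⋯ × P)` equals the convex hull of
`h(E × ⋯ × E)`. -/
theorem convexHull_multilinear_image_eq_of_extremePoints {V W : Type*}
    [NormedAddCommGroup V] [NormedSpace ℝ V] [FiniteDimensional ℝ V]
    [AddCommGroup W] [Module ℝ W] [FiniteDimensional ℝ W]
    (n : ℕ) (hn : 0 < n)
    (P : Set V) (hPconv : Convex ℝ P) (hPcomp : IsCompact P)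
    (h : MultilinearMap ℝ (fun _ : Fin n => V) W) :
    convexHull ℝ ((fun v : Fin n → V => h v) '' {v | ∀ i, v i ∈ P}) =
      convexHull ℝ ((fun v : Fin n → V => h v) '' {v | ∀ i, v i ∈ Set.extremePoints ℝ P}) := by
  set E := P.extremePoints ℝ with hE
  have hPsub : P ⊆ convexHull ℝ E :=
    aux_minkowski (Module.finrank ℝ V) V le_rfl P hPcomp hPconv
  apply Set.Subset.antisymm
  · refine convexHull_min ?_ (convex_convexHull ℝ _)
    rintro _ ⟨v, hv, rfl⟩
    exact aux_multilinear_hull h E n v (fun i _ => hPsub (hv i))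
      (fun i hi => absurd i.isLt (by omega))
  · apply convexHull_mono
    apply Set.image_mono
    intro v hv i
    exact extremePoints_subset (hv i)
end
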